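/- arXiv:2603.19161 — 6 statements merged into one kernel-verified Lean document; each statement's English description precedes it below -/
import Mathlib

section
/- Homological Perturbation Lemma, part 1 (paper's Appendix B Proposition): Given a homotopy equivalence between cochain complexes (S, d_S) and (B, d_B) with chain maps ι: S → B, π: B → S, homotopy η, and given a small perturbation δ of d_B, set A = (id − δ∘η)^{−1}∘δ (a family of maps Bⁿ → Bⁿ⁺¹). Then the degreewise map d_S + π∘A∘ι: Sⁿ → Sⁿ⁺¹ is square-zero, i.e. (d_S + π∘A∘ι)∘(d_S + π∘A∘ι) = 0 in every degree, so it defines a new differential d′_S on the graded module underlying S. -/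
/-!
Statement 0: Homological Perturbation Lemma, part 1.

A homotopy equivalence between ℤ-indexed cochain complexes `(S, dS)` and `(B, dB)` of
`R`-modules consists of chain maps `ι : S → B` and `π : B → S` which are
quasi-isomorphisms, together with a homotopy `η` (of degree `-1`) with
`ι ∘ π = id + dB ∘ η + η ∘ dB`.  Given a small perturbation `δ` of `dB`
(i.e. `(dB + δ)² = 0` and `id - δ ∘ η` invertible in every degree), set
`A = (id - δ∘η)⁻¹ ∘ δ`.  Then `dS + π ∘ A ∘ ι` is square-zero in every degree, so it
defines a new differential on the graded module underlying `S`.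

Here `η n : B (n+1) →ₗ B n` plays the role of `ηₙ₊₁ : Bⁿ⁺¹ → Bⁿ`, and all degreewise
conditions are stated for every integer (every degree is of the form `n + 1` for `n : ℤ`).
-/

set_option maxHeartbeats 1000000
universe u v

private theorem aux_sub_of_sub_eq {M : Type v} [AddCommGroup M] {a b c : M}
    (h : a - b = c) : b = a - c := by rw [← h]; abel

/-- `g` (given in each degree `n + 1`, which covers every degree) induces a bijection on
cohomology in every degree: elementwise surjectivity and injectivity of the induced map
on cohomology.  This is the notion of quasi-isomorphism for families of `R`-modules with
differentials. -/
def IsQuasiIsoShifted {R : Type u} [Ring R]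
    {X Y : ℤ → Type v} [∀ n, AddCommGroup (X n)] [∀ n, Module R (X n)]
    [∀ n, AddCommGroup (Y n)] [∀ n, Module R (Y n)]
    (dX : ∀ n : ℤ, X n →ₗ[R] X (n + 1)) (dY : ∀ n : ℤ, Y n →ₗ[R] Y (n + 1))
    (g : ∀ n : ℤ, X (n + 1) →ₗ[R] Y (n + 1)) : Prop :=
  (∀ (n : ℤ) (y : Y (n + 1)), dY (n + 1) y = 0 →
      ∃ x : X (n + 1), dX (n + 1) x = 0 ∧ ∃ z : Y n, g n x = y + dY n z) ∧
  (∀ (n : ℤ) (x : X (n + 1)), dX (n + 1) x = 0 → (∃ z : Y n, g n x = dY n z) →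
      ∃ w : X n, x = dX n w)

theorem homological_perturbation_lemma_part1 {R : Type u} [Ring R]
    (S B : ℤ → Type v)
    [∀ n, AddCommGroup (S n)] [∀ n, Module R (S n)]
    [∀ n, AddCommGroup (B n)] [∀ n, Module R (B n)]
    (dS : ∀ n : ℤ, S n →ₗ[R] S (n + 1)) (dB : ∀ n : ℤ, B n →ₗ[R] B (n + 1))
    (hdS : ∀ n, dS (n + 1) ∘ₗ dS n = 0) (hdB : ∀ n, dB (n + 1) ∘ₗ dB n = 0)
    (ι : ∀ n, S n →ₗ[R] B n) (π : ∀ n, B n →ₗ[R] S n)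
    (hι : ∀ n, dB n ∘ₗ ι n = ι (n + 1) ∘ₗ dS n)
    (hπ : ∀ n, dS n ∘ₗ π n = π (n + 1) ∘ₗ dB n)
    (hιq : IsQuasiIsoShifted dS dB fun n => ι (n + 1))
    (hπq : IsQuasiIsoShifted dB dS fun n => π (n + 1))
    (η : ∀ n : ℤ, B (n + 1) →ₗ[R] B n)
    (hη : ∀ n, ι (n + 1) ∘ₗ π (n + 1) =
      LinearMap.id + dB n ∘ₗ η n + η (n + 1) ∘ₗ dB (n + 1))
    (δ : ∀ n : ℤ, B n →ₗ[R] B (n + 1))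
    (hδ : ∀ n, (dB (n + 1) + δ (n + 1)) ∘ₗ (dB n + δ n) = 0)
    (small : ∀ n : ℤ,
      IsUnit ((1 : Module.End R (B (n + 1))) - (δ n ∘ₗ η n : Module.End R (B (n + 1)))))
    (A : ∀ n : ℤ, B n →ₗ[R] B (n + 1))
    (hA : ∀ n : ℤ, A n =
      (Ring.inverse ((1 : Module.End R (B (n + 1)))
        - (δ n ∘ₗ η n : Module.End R (B (n + 1)))) : Module.End R (B (n + 1))) ∘ₗ δ n) :
    ∀ n : ℤ,
      (dS (n + 1) + π (n + 1 + 1) ∘ₗ A (n + 1) ∘ₗ ι (n + 1)) ∘ₗ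
        (dS n + π (n + 1) ∘ₗ A n ∘ₗ ι n) = 0 := by

  intro n
  -- Key inverse identities at the element level
  have key0 : ∀ y : B n, δ n (η n (A n y)) = A n y - δ n y := by
    intro y
    have h1 : ((1 : Module.End R (B (n+1))) - (δ n ∘ₗ η n : Module.End R (B (n+1)))) *
        Ring.inverse ((1 : Module.End R (B (n+1))) - (δ n ∘ₗ η n : Module.End R (B (n+1))))
        = 1 := Ring.mul_inverse_cancel _ (small n)
    have h2 := LinearMap.congr_fun h1 (δ n y)
    rw [hA n]
    simp only [Module.End.mul_apply, LinearMap.sub_apply, Module.End.one_apply,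
      LinearMap.comp_apply] at h2 ⊢
    exact aux_sub_of_sub_eq h2
  have key1 : ∀ y : B (n+1), A (n+1) (η (n+1) (δ (n+1) y)) = A (n+1) y - δ (n+1) y := by
    intro y
    have h1 : Ring.inverse ((1 : Module.End R (B (n+1+1)))
          - (δ (n+1) ∘ₗ η (n+1) : Module.End R (B (n+1+1)))) *
        ((1 : Module.End R (B (n+1+1)))
          - (δ (n+1) ∘ₗ η (n+1) : Module.End R (B (n+1+1)))) = 1 :=
      Ring.inverse_mul_cancel _ (small (n+1))
    have h2 := LinearMap.congr_fun h1 (δ (n+1) y)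
    rw [hA (n+1)]
    simp only [Module.End.mul_apply, LinearMap.sub_apply, Module.End.one_apply,
      LinearMap.comp_apply, map_sub] at h2 ⊢
    exact aux_sub_of_sub_eq h2
  have hδe : ∀ y : B n,
      dB (n+1) (δ n y) + δ (n+1) (dB n y) + δ (n+1) (δ n y) = 0 := by
    intro y
    have h1 := LinearMap.congr_fun (hδ n) y
    have h2 := LinearMap.congr_fun (hdB n) y
    simp only [LinearMap.comp_apply, LinearMap.add_apply, LinearMap.zero_apply,
      map_add] at h1 h2
    rw [h2, zero_add] at h1
    rw [← h1]
    abel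
  apply LinearMap.ext
  intro x
  simp only [LinearMap.comp_apply, LinearMap.add_apply, LinearMap.zero_apply]
  set b : B n := ι n x with hb
  set a : B (n+1) := A n b with ha
  set e : B n := η n a with he
  -- chain map / homotopy identities applied to elements
  have h1 : dS (n+1) (dS n x) = 0 := by
    have := LinearMap.congr_fun (hdS n) x
    simpa using this
  have h2 : dS (n+1) (π (n+1) a) = π (n+1+1) (dB (n+1) a) :=
    LinearMap.congr_fun (hπ (n+1)) a
  have h3 : ι (n+1) (dS n x) = dB n b := (LinearMap.congr_fun (hι n) x).symm
  have h4 : ι (n+1) (π (n+1) a) = a + dB n e + η (n+1) (dB (n+1) a) :=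
    LinearMap.congr_fun (hη n) a
  -- a = δ b + δ e
  have ha2 : a = δ n b + δ n e := by
    have := key0 b
    rw [← ha, ← he] at this
    rw [this]
    abel
  have T1 : dB (n+1) a
      = -(δ (n+1) (dB n b) + δ (n+1) (dB n e) + δ (n+1) a) := by
    have hdb := hδe b
    have hde := hδe e
    have : dB (n+1) a + (δ (n+1) (dB n b) + δ (n+1) (dB n e) + δ (n+1) a) = 0 := by
      calc dB (n+1) a + (δ (n+1) (dB n b) + δ (n+1) (dB n e) + δ (n+1) a)
          = (dB (n+1) (δ n b) + δ (n+1) (dB n b) + δ (n+1) (δ n b))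
            + (dB (n+1) (δ n e) + δ (n+1) (dB n e) + δ (n+1) (δ n e)) := by
            rw [show dB (n+1) a = dB (n+1) (δ n b) + dB (n+1) (δ n e) by
                  rw [ha2, map_add],
                show δ (n+1) a = δ (n+1) (δ n b) + δ (n+1) (δ n e) by
                  rw [ha2, map_add]]
            abel
        _ = 0 := by rw [hdb, hde, add_zero]
    exact eq_neg_of_add_eq_zero_left this
  have E0 : dB (n+1) a + A (n+1) (dB n b)
      + (A (n+1) a + A (n+1) (dB n e) + A (n+1) (η (n+1) (dB (n+1) a))) = 0 := by
    rw [T1]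
    simp only [map_neg, map_add, key1 (dB n b), key1 (dB n e), key1 a]
    abel
  have E1 := congrArg (π (n+1+1)) E0
  simp only [map_add, map_zero] at E1
  simp only [map_add, h1, h2, h3, h4, zero_add]
  rw [← E1]
  abel
end

section
/- Homological Perturbation Lemma, part 2 (paper's Appendix B Proposition): Given a homotopy equivalence between cochain complexes (S, d_S) and (B, d_B) with chain maps ι: S → B, π: B → S, homotopy η, and given a small perturbation δ of d_B, set A = (id − δ∘η)^{−1}∘δ, d′_S = d_S + π∘A∘ι, ι′ = ι + η∘A∘ι, and π′ = π + π∘A∘η. Then ι′ and π′ are chain maps: (d_B + δ)∘ι′ = ι′∘d′_S and d′_S∘π′ = π′∘(d_B + δ) in every degree. -/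
theorem homological_perturbation_lemma_part2 {R : Type u} [Ring R]
    (S B : ℤ → Type v)
    [∀ n, AddCommGroup (S n)] [∀ n, Module R (S n)]
    [∀ n, AddCommGroup (B n)] [∀ n, Module R (B n)]
    (dS : ∀ n : ℤ, S n →ₗ[R] S (n + 1)) (dB : ∀ n : ℤ, B n →ₗ[R] B (n + 1))
    (hdS : ∀ n, dS (n + 1) ∘ₗ dS n = 0) (hdB : ∀ n, dB (n + 1) ∘ₗ dB n = 0)
    (ι : ∀ n, S n →ₗ[R] B n) (π : ∀ n, B n →ₗ[R] S n)
    (hι : ∀ n, dB n ∘ₗ ι n = ι (n + 1) ∘ₗ dS n)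
    (hπ : ∀ n, dS n ∘ₗ π n = π (n + 1) ∘ₗ dB n)
    (hιq : IsQuasiIsoShifted dS dB fun n => ι (n + 1))
    (hπq : IsQuasiIsoShifted dB dS fun n => π (n + 1))
    (η : ∀ n : ℤ, B (n + 1) →ₗ[R] B n)
    (hη : ∀ n, ι (n + 1) ∘ₗ π (n + 1) =
      LinearMap.id + dB n ∘ₗ η n + η (n + 1) ∘ₗ dB (n + 1))
    (δ : ∀ n : ℤ, B n →ₗ[R] B (n + 1))
    (hδ : ∀ n, (dB (n + 1) + δ (n + 1)) ∘ₗ (dB n + δ n) = 0)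
    (small : ∀ n : ℤ,
      IsUnit ((1 : Module.End R (B (n + 1))) - (δ n ∘ₗ η n : Module.End R (B (n + 1)))))
    (A : ∀ n : ℤ, B n →ₗ[R] B (n + 1))
    (hA : ∀ n : ℤ, A n =
      (Ring.inverse ((1 : Module.End R (B (n + 1)))
        - (δ n ∘ₗ η n : Module.End R (B (n + 1)))) : Module.End R (B (n + 1))) ∘ₗ δ n)
:
    (∀ n : ℤ,
      (dB n + δ n) ∘ₗ (ι n + η n ∘ₗ A n ∘ₗ ι n) =
        (ι (n + 1) + η (n + 1) ∘ₗ A (n + 1) ∘ₗ ι (n + 1)) ∘ₗ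
          (dS n + π (n + 1) ∘ₗ A n ∘ₗ ι n)) ∧
    (∀ n : ℤ,
      (dS (n + 1) + π (n + 1 + 1) ∘ₗ A (n + 1) ∘ₗ ι (n + 1)) ∘ₗ
          (π (n + 1) + π (n + 1) ∘ₗ A n ∘ₗ η n) =
        (π (n + 1 + 1) + π (n + 1 + 1) ∘ₗ A (n + 1) ∘ₗ η (n + 1)) ∘ₗ
          (dB (n + 1) + δ (n + 1))) := by
  have hι' : ∀ (n : ℤ) (x : S n), ι (n+1) (dS n x) = dB n (ι n x) :=
    fun n x => (LinearMap.congr_fun (hι n) x).symm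
  have hπ' : ∀ (n : ℤ) (y : B n), dS n (π n y) = π (n+1) (dB n y) :=
    fun n y => LinearMap.congr_fun (hπ n) y
  have hη' : ∀ (n : ℤ) (y : B (n+1)),
      ι (n+1) (π (n+1) y) = y + dB n (η n y) + η (n+1) (dB (n+1) y) := by
    intro n y
    have h := LinearMap.congr_fun (hη n) y
    simpa only [LinearMap.comp_apply, LinearMap.add_apply, LinearMap.id_apply] using h
  have hdB' : ∀ (n : ℤ) (x : B n), dB (n+1) (dB n x) = 0 :=
    fun n x => LinearMap.congr_fun (hdB n) x
  have hP : ∀ (n : ℤ) (t : B n),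
      dB (n+1) (δ n t) + δ (n+1) (dB n t) + δ (n+1) (δ n t) = 0 := by
    intro n t
    have h := LinearMap.congr_fun (hδ n) t
    simp only [LinearMap.add_apply, LinearMap.comp_apply, LinearMap.zero_apply, map_add] at h
    have h2 := hdB' n t
    linear_combination (norm := abel) h - h2
  have eA : ∀ (n : ℤ) (t : B n), A n t = δ n t + δ n (η n (A n t)) := by
    intro n t
    have h1 : ((1 : Module.End R (B (n+1))) - (δ n ∘ₗ η n)) (A n t) = δ n t := by
      rw [hA n, LinearMap.comp_apply, ← Module.End.mul_apply,
        Ring.mul_inverse_cancel _ (small n), Module.End.one_apply]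
    have h2 : ((1 : Module.End R (B (n+1))) - (δ n ∘ₗ η n)) (A n t)
        = A n t - δ n (η n (A n t)) := by
      simp [LinearMap.sub_apply, LinearMap.comp_apply]
    linear_combination (norm := abel) h1 - h2
  have eA2 : ∀ (n : ℤ) (t : B n), A n t = δ n t + A n (η n (δ n t)) := by
    intro n t
    have h0 : ∀ w : B n, A n w
        = Ring.inverse ((1 : Module.End R (B (n+1))) - (δ n ∘ₗ η n)) (δ n w) :=
      fun w => by rw [hA n, LinearMap.comp_apply]
    have h1 : A n t - A n (η n (δ n t))
        = Ring.inverse ((1 : Module.End R (B (n+1))) - (δ n ∘ₗ η n))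
            (((1 : Module.End R (B (n+1))) - (δ n ∘ₗ η n)) (δ n t)) := by
      rw [h0, h0, ← map_sub]
      congr 1
    have h2 : Ring.inverse ((1 : Module.End R (B (n+1))) - (δ n ∘ₗ η n))
        (((1 : Module.End R (B (n+1))) - (δ n ∘ₗ η n)) (δ n t)) = δ n t := by
      rw [← Module.End.mul_apply, Ring.inverse_mul_cancel _ (small n), Module.End.one_apply]
    linear_combination (norm := abel) h1 + h2
  have hK : ∀ (n : ℤ) (y : B n),
      A (n+1) (dB n y) + dB (n+1) (A n y) + A (n+1) (A n y)
        + A (n+1) (dB n (η n (A n y))) + A (n+1) (η (n+1) (dB (n+1) (A n y))) = 0 := by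
    intro n y
    set u : Module.End R (B (n+1+1)) :=
      (1 : Module.End R (B (n+1+1))) - (δ (n+1) ∘ₗ η (n+1)) with hu
    have uA : ∀ t : B (n+1), u (A (n+1) t) = δ (n+1) t := by
      intro t
      rw [hu, hA (n+1), LinearMap.comp_apply, ← Module.End.mul_apply,
        Ring.mul_inverse_cancel _ (small (n+1)), Module.End.one_apply]
    have us : u (A (n+1) (dB n y) + dB (n+1) (A n y) + A (n+1) (A n y)
        + A (n+1) (dB n (η n (A n y))) + A (n+1) (η (n+1) (dB (n+1) (A n y)))) = 0 := by
      have e1 := uA (dB n y)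
      have e2 := uA (A n y)
      have e3 := uA (dB n (η n (A n y)))
      have e4 := uA (η (n+1) (dB (n+1) (A n y)))
      have e5 : u (dB (n+1) (A n y))
          = dB (n+1) (A n y) - δ (n+1) (η (n+1) (dB (n+1) (A n y))) := by
        simp [hu, LinearMap.sub_apply, LinearMap.comp_apply]
      have q1 : dB (n+1) (A n y)
          = dB (n+1) (δ n y) + dB (n+1) (δ n (η n (A n y))) := by
        rw [show dB (n+1) (A n y) = dB (n+1) (δ n y + δ n (η n (A n y))) from
          congrArg _ (eA n y), map_add]
      have q2 : δ (n+1) (A n y)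
          = δ (n+1) (δ n y) + δ (n+1) (δ n (η n (A n y))) := by
        rw [show δ (n+1) (A n y) = δ (n+1) (δ n y + δ n (η n (A n y))) from
          congrArg _ (eA n y), map_add]
      simp only [map_add]
      linear_combination (norm := abel) e1 + e5 + e2 + e3 + e4 + q1 + q2 + hP n y
        + hP n (η n (A n y))
    have hinv : Ring.inverse u * u = 1 := Ring.inverse_mul_cancel _ (small (n+1))
    calc A (n+1) (dB n y) + dB (n+1) (A n y) + A (n+1) (A n y)
          + A (n+1) (dB n (η n (A n y))) + A (n+1) (η (n+1) (dB (n+1) (A n y)))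
        = Ring.inverse u (u (A (n+1) (dB n y) + dB (n+1) (A n y) + A (n+1) (A n y)
          + A (n+1) (dB n (η n (A n y))) + A (n+1) (η (n+1) (dB (n+1) (A n y)))))
          := by rw [← Module.End.mul_apply, hinv, Module.End.one_apply]
      _ = 0 := by rw [us, map_zero]
  refine ⟨fun n => ?_, fun n => ?_⟩
  · apply LinearMap.ext
    intro x
    simp only [LinearMap.add_apply, LinearMap.comp_apply, map_add, hι', hη']
    have a := eA n (ι n x)
    have k := hK n (ι n x)
    have kη := congrArg (η (n+1)) k
    simp only [map_add, map_zero] at kη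
    linear_combination (norm := abel) -a - kη
  · apply LinearMap.ext
    intro y
    simp only [LinearMap.add_apply, LinearMap.comp_apply, map_add, hπ', hη']
    have a := eA2 (n+1) y
    have aπ := congrArg (π (n+1+1)) a
    simp only [map_add] at aπ
    have k := hK n (η n y)
    have kπ := congrArg (π (n+1+1)) k
    simp only [map_add, map_zero] at kπ
    linear_combination (norm := abel) kπ + aπ
end

section
/- Homological Perturbation Lemma, part 3 (paper's Appendix B Proposition): Given a homotopy equivalence between cochain complexes (S, d_S) and (B, d_B) with chain maps ι: S → B, π: B → S, homotopy η, and given a small perturbation δ of d_B, set A = (id − δ∘η)^{−1}∘δ, ι′ = ι + η∘A∘ι, π′ = π + π∘A∘η, and η′ = η + η∘A∘η. Then ι′∘π′ = id_B + (d_B + δ)∘η′ + η′∘(d_B + δ) in every degree, i.e. η′ is a homotopy between ι′∘π′ and the identity of the perturbed complex (B, d_B + δ). -/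
theorem homological_perturbation_lemma_part3 {R : Type u} [Ring R]
    (S B : ℤ → Type v)
    [∀ n, AddCommGroup (S n)] [∀ n, Module R (S n)]
    [∀ n, AddCommGroup (B n)] [∀ n, Module R (B n)]
    (dS : ∀ n : ℤ, S n →ₗ[R] S (n + 1)) (dB : ∀ n : ℤ, B n →ₗ[R] B (n + 1))
    (hdS : ∀ n, dS (n + 1) ∘ₗ dS n = 0) (hdB : ∀ n, dB (n + 1) ∘ₗ dB n = 0)
    (ι : ∀ n, S n →ₗ[R] B n) (π : ∀ n, B n →ₗ[R] S n)
    (hι : ∀ n, dB n ∘ₗ ι n = ι (n + 1) ∘ₗ dS n)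
    (hπ : ∀ n, dS n ∘ₗ π n = π (n + 1) ∘ₗ dB n)
    (hιq : IsQuasiIsoShifted dS dB fun n => ι (n + 1))
    (hπq : IsQuasiIsoShifted dB dS fun n => π (n + 1))
    (η : ∀ n : ℤ, B (n + 1) →ₗ[R] B n)
    (hη : ∀ n, ι (n + 1) ∘ₗ π (n + 1) =
      LinearMap.id + dB n ∘ₗ η n + η (n + 1) ∘ₗ dB (n + 1))
    (δ : ∀ n : ℤ, B n →ₗ[R] B (n + 1))
    (hδ : ∀ n, (dB (n + 1) + δ (n + 1)) ∘ₗ (dB n + δ n) = 0)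
    (small : ∀ n : ℤ,
      IsUnit ((1 : Module.End R (B (n + 1))) - (δ n ∘ₗ η n : Module.End R (B (n + 1)))))
    (A : ∀ n : ℤ, B n →ₗ[R] B (n + 1))
    (hA : ∀ n : ℤ, A n =
      (Ring.inverse ((1 : Module.End R (B (n + 1)))
        - (δ n ∘ₗ η n : Module.End R (B (n + 1)))) : Module.End R (B (n + 1))) ∘ₗ δ n)
:
    ∀ n : ℤ,
      (ι (n + 1) + η (n + 1) ∘ₗ A (n + 1) ∘ₗ ι (n + 1)) ∘ₗ
          (π (n + 1) + π (n + 1) ∘ₗ A n ∘ₗ η n) =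
        LinearMap.id
          + (dB n + δ n) ∘ₗ (η n + η n ∘ₗ A n ∘ₗ η n)
          + (η (n + 1) + η (n + 1) ∘ₗ A (n + 1) ∘ₗ η (n + 1)) ∘ₗ
              (dB (n + 1) + δ (n + 1)) := by
  -- Key identities for `A`:
  have he1 : ∀ m : ℤ, ((1 : Module.End R (B (m+1))) - (δ m ∘ₗ η m)) ∘ₗ A m = δ m := by
    intro m
    rw [hA m, ← LinearMap.comp_assoc, ← Module.End.mul_eq_comp,
      Ring.mul_inverse_cancel _ (small m), Module.End.one_eq_id, LinearMap.id_comp]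
  have he2 : ∀ m : ℤ, A m ∘ₗ ((1 : Module.End R (B m)) - (η m ∘ₗ δ m)) = δ m := by
    intro m
    have hswap : δ m ∘ₗ ((1 : Module.End R (B m)) - (η m ∘ₗ δ m))
        = ((1 : Module.End R (B (m+1))) - (δ m ∘ₗ η m)) ∘ₗ δ m := by
      simp only [LinearMap.comp_sub, LinearMap.sub_comp, Module.End.one_eq_id,
        LinearMap.comp_id, LinearMap.id_comp, LinearMap.comp_assoc]
    rw [hA m, LinearMap.comp_assoc, hswap, ← LinearMap.comp_assoc,
      ← Module.End.mul_eq_comp, Ring.inverse_mul_cancel _ (small m),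
      Module.End.one_eq_id, LinearMap.id_comp]
  have z1 : ∀ m : ℤ, (A m - δ m - (δ m ∘ₗ η m) ∘ₗ A m) = 0 := by
    intro m
    have h := he1 m
    simp only [LinearMap.sub_comp, Module.End.one_eq_id, LinearMap.id_comp] at h
    rw [sub_right_comm, h, sub_self]
  have z2 : ∀ m : ℤ, (A m - δ m - (A m ∘ₗ η m) ∘ₗ δ m) = 0 := by
    intro m
    have h := he2 m
    simp only [LinearMap.comp_sub, Module.End.one_eq_id, LinearMap.comp_id,
      ← LinearMap.comp_assoc] at h
    rw [sub_right_comm, h, sub_self]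
  intro n
  set L : Module.End R (B (n+1+1)) :=
    (1 : Module.End R (B (n+1+1))) - (δ (n+1) ∘ₗ η (n+1)) with hLdef
  set Rr : Module.End R (B n) := (1 : Module.End R (B n)) - (η n ∘ₗ δ n) with hRdef
  set M : B n →ₗ[R] B (n+1+1) :=
    dB (n+1) ∘ₗ A n + A (n+1) ∘ₗ dB n
      + (A (n+1) ∘ₗ (LinearMap.id + dB n ∘ₗ η n + η (n+1) ∘ₗ dB (n+1))) ∘ₗ A n with hMdef
  have hzero : dB (n+1) ∘ₗ δ n + δ (n+1) ∘ₗ dB n + δ (n+1) ∘ₗ δ n = 0 := by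
    have h := hδ n
    simp only [LinearMap.add_comp, LinearMap.comp_add] at h
    rw [hdB n] at h
    rw [← h]
    abel
  have step1 : L ∘ₗ (M ∘ₗ Rr)
      = dB (n+1) ∘ₗ δ n + δ (n+1) ∘ₗ dB n + δ (n+1) ∘ₗ δ n := by
    have hArn : A n ∘ₗ Rr = δ n := he2 n
    have hLA : L ∘ₗ A (n+1) = δ (n+1) := he1 (n+1)
    calc L ∘ₗ (M ∘ₗ Rr)
        = L ∘ₗ (dB (n+1) ∘ₗ (A n ∘ₗ Rr)) + (L ∘ₗ A (n+1)) ∘ₗ (dB n ∘ₗ Rr)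
          + ((L ∘ₗ A (n+1)) ∘ₗ (LinearMap.id + dB n ∘ₗ η n + η (n+1) ∘ₗ dB (n+1)))
              ∘ₗ (A n ∘ₗ Rr) := by
          simp only [hMdef, LinearMap.add_comp, LinearMap.comp_add,
            LinearMap.comp_assoc] <;> abel
      _ = L ∘ₗ (dB (n+1) ∘ₗ δ n) + δ (n+1) ∘ₗ (dB n ∘ₗ Rr)
          + (δ (n+1) ∘ₗ (LinearMap.id + dB n ∘ₗ η n + η (n+1) ∘ₗ dB (n+1))) ∘ₗ δ n := by
          rw [hArn, hLA]
      _ = dB (n+1) ∘ₗ δ n + δ (n+1) ∘ₗ dB n + δ (n+1) ∘ₗ δ n := by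
          simp only [hLdef, hRdef, LinearMap.comp_sub, LinearMap.sub_comp,
            LinearMap.comp_add, LinearMap.add_comp, LinearMap.comp_assoc,
            Module.End.one_eq_id, LinearMap.id_comp, LinearMap.comp_id] <;> abel
  have hLMR0 : L ∘ₗ (M ∘ₗ Rr) = 0 := by rw [step1, hzero]
  have hRr : Rr ∘ₗ ((1 : Module.End R (B n)) + η n ∘ₗ A n) = 1 := by
    calc Rr ∘ₗ ((1 : Module.End R (B n)) + η n ∘ₗ A n)
        = 1 + η n ∘ₗ (A n - δ n - (δ n ∘ₗ η n) ∘ₗ A n) := by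
          simp only [hRdef, LinearMap.sub_comp, LinearMap.comp_sub,
            LinearMap.comp_add, LinearMap.add_comp, Module.End.one_eq_id,
            LinearMap.id_comp, LinearMap.comp_id, LinearMap.comp_assoc] <;> abel
      _ = 1 := by rw [z1 n, LinearMap.comp_zero, add_zero]
  have hM0 : M = 0 := by
    have e : M = (Ring.inverse L) ∘ₗ
        ((L ∘ₗ (M ∘ₗ Rr)) ∘ₗ ((1 : Module.End R (B n)) + η n ∘ₗ A n)) := by
      rw [LinearMap.comp_assoc, LinearMap.comp_assoc, hRr]
      rw [show (M ∘ₗ (1 : Module.End R (B n))) = M from LinearMap.comp_id M]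
      rw [← LinearMap.comp_assoc, ← Module.End.mul_eq_comp,
        Ring.inverse_mul_cancel _ (small (n+1)), Module.End.one_eq_id, LinearMap.id_comp]
    rw [hLMR0, LinearMap.zero_comp, LinearMap.comp_zero] at e
    exact e
  have hfac : (ι (n + 1) + η (n + 1) ∘ₗ A (n + 1) ∘ₗ ι (n + 1)) ∘ₗ
      (π (n + 1) + π (n + 1) ∘ₗ A n ∘ₗ η n)
      = ((LinearMap.id + η (n+1) ∘ₗ A (n+1)) ∘ₗ (ι (n+1) ∘ₗ π (n+1))) ∘ₗ
        (LinearMap.id + A n ∘ₗ η n) := by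
    simp only [LinearMap.add_comp, LinearMap.comp_add, LinearMap.comp_assoc,
      LinearMap.id_comp, LinearMap.comp_id] <;> abel
  rw [hfac, hη n]
  have hcor : ((LinearMap.id + η (n+1) ∘ₗ A (n+1)) ∘ₗ
        (LinearMap.id + dB n ∘ₗ η n + η (n+1) ∘ₗ dB (n+1))) ∘ₗ
        (LinearMap.id + A n ∘ₗ η n)
      = (LinearMap.id + (dB n + δ n) ∘ₗ (η n + η n ∘ₗ A n ∘ₗ η n)
          + (η (n+1) + η (n+1) ∘ₗ A (n+1) ∘ₗ η (n+1)) ∘ₗ (dB (n+1) + δ (n+1)))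
        + (A n - δ n - (δ n ∘ₗ η n) ∘ₗ A n) ∘ₗ η n
        + η (n+1) ∘ₗ (A (n+1) - δ (n+1) - (A (n+1) ∘ₗ η (n+1)) ∘ₗ δ (n+1))
        + (η (n+1) ∘ₗ M) ∘ₗ η n := by
    simp only [hMdef, LinearMap.add_comp, LinearMap.comp_add, LinearMap.sub_comp,
      LinearMap.comp_sub, LinearMap.comp_assoc, LinearMap.id_comp,
      LinearMap.comp_id] <;> abel
  rw [hcor, z1 n, z2 (n+1), hM0]
  simp
end

section
/- Homological Perturbation Lemma, part 4 (paper's Appendix B Proposition): Given a homotopy equivalence between cochain complexes (S, d_S) and (B, d_B) with chain maps ι: S → B, π: B → S, homotopy η, and given a small perturbation δ of d_B, set A = (id − δ∘η)^{−1}∘δ and d′_S = d_S + π∘A∘ι. Then the chain maps ι′ = ι + η∘A∘ι and π′ = π + π∘A∘η between (S, d′_S) and (B, d_B + δ) are quasi-isomorphisms; in particular the perturbed data again constitutes a homotopy equivalence. -/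
set_option maxHeartbeats 1600000 in
theorem homological_perturbation_lemma_part4 {R : Type u} [Ring R]
    (S B : ℤ → Type v)
    [∀ n, AddCommGroup (S n)] [∀ n, Module R (S n)]
    [∀ n, AddCommGroup (B n)] [∀ n, Module R (B n)]
    (dS : ∀ n : ℤ, S n →ₗ[R] S (n + 1)) (dB : ∀ n : ℤ, B n →ₗ[R] B (n + 1))
    (hdS : ∀ n, dS (n + 1) ∘ₗ dS n = 0) (hdB : ∀ n, dB (n + 1) ∘ₗ dB n = 0)
    (ι : ∀ n, S n →ₗ[R] B n) (π : ∀ n, B n →ₗ[R] S n)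
    (hι : ∀ n, dB n ∘ₗ ι n = ι (n + 1) ∘ₗ dS n)
    (hπ : ∀ n, dS n ∘ₗ π n = π (n + 1) ∘ₗ dB n)
    (hιq : IsQuasiIsoShifted dS dB fun n => ι (n + 1))
    (hπq : IsQuasiIsoShifted dB dS fun n => π (n + 1))
    (η : ∀ n : ℤ, B (n + 1) →ₗ[R] B n)
    (hη : ∀ n, ι (n + 1) ∘ₗ π (n + 1) =
      LinearMap.id + dB n ∘ₗ η n + η (n + 1) ∘ₗ dB (n + 1))
    (δ : ∀ n : ℤ, B n →ₗ[R] B (n + 1))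
    (hδ : ∀ n, (dB (n + 1) + δ (n + 1)) ∘ₗ (dB n + δ n) = 0)
    (small : ∀ n : ℤ,
      IsUnit ((1 : Module.End R (B (n + 1))) - (δ n ∘ₗ η n : Module.End R (B (n + 1)))))
    (A : ∀ n : ℤ, B n →ₗ[R] B (n + 1))
    (hA : ∀ n : ℤ, A n =
      (Ring.inverse ((1 : Module.End R (B (n + 1)))
        - (δ n ∘ₗ η n : Module.End R (B (n + 1)))) : Module.End R (B (n + 1))) ∘ₗ δ n)
:
    IsQuasiIsoShifted (fun n => dS n + π (n + 1) ∘ₗ A n ∘ₗ ι n)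
        (fun n => dB n + δ n)
        (fun n => ι (n + 1) + η (n + 1) ∘ₗ A (n + 1) ∘ₗ ι (n + 1)) ∧
    IsQuasiIsoShifted (fun n => dB n + δ n)
        (fun n => dS n + π (n + 1) ∘ₗ A n ∘ₗ ι n)
        (fun n => π (n + 1) + π (n + 1) ∘ₗ A n ∘ₗ η n) := by
  -- pointwise versions of the hypotheses
  have hdBp : ∀ n (v : B n), dB (n+1) (dB n v) = 0 := fun n v => by
    simpa using LinearMap.congr_fun (hdB n) v
  have hιp : ∀ n (v : S n), dB n (ι n v) = ι (n+1) (dS n v) := fun n v => by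
    simpa using LinearMap.congr_fun (hι n) v
  have hπp : ∀ n (v : B n), dS n (π n v) = π (n+1) (dB n v) := fun n v => by
    simpa using LinearMap.congr_fun (hπ n) v
  have hηp : ∀ n (v : B (n+1)), ι (n+1) (π (n+1) v)
      = v + dB n (η n v) + η (n+1) (dB (n+1) v) := fun n v => by
    simpa using LinearMap.congr_fun (hη n) v
  have hd4p : ∀ n (v : B n), dB (n+1) (δ n v) + δ (n+1) (dB n v) + δ (n+1) (δ n v) = 0 := by
    intro n v
    have h := LinearMap.congr_fun (hδ n) v
    simp only [LinearMap.add_apply, LinearMap.comp_apply, LinearMap.zero_apply, map_add] at h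
    rw [hdBp n v] at h
    rw [← h]; abel
  have hAp : ∀ n (v : B n), A n v
      = Ring.inverse ((1 : Module.End R (B (n + 1)))
        - (δ n ∘ₗ η n : Module.End R (B (n + 1)))) (δ n v) := fun n v => by
    rw [hA n]; rfl
  have hE1p : ∀ n (v : B n), A n v = δ n v + δ n (η n (A n v)) := by
    intro n v
    have h := LinearMap.congr_fun (Ring.mul_inverse_cancel _ (small n)) (δ n v)
    simp only [Module.End.mul_apply, LinearMap.sub_apply, Module.End.one_apply,
      LinearMap.comp_apply] at h
    rw [← hAp n v] at h
    exact sub_eq_iff_eq_add.mp h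
  have hE2p : ∀ n (v : B n), A n v = δ n v + A n (η n (δ n v)) := by
    intro n v
    have h := LinearMap.congr_fun (Ring.inverse_mul_cancel _ (small n)) (δ n v)
    simp only [Module.End.mul_apply, LinearMap.sub_apply, Module.End.one_apply,
      LinearMap.comp_apply, map_sub] at h
    rw [← hAp n v, ← hAp n (η n (δ n v))] at h
    exact sub_eq_iff_eq_add.mp h
  have hE1r : ∀ n (v : B n), δ n (η n (A n v)) = A n v - δ n v := by
    intro n v
    have h2 : δ n (η n (A n v)) = (δ n v + δ n (η n (A n v))) - δ n v := by abel
    rw [← hE1p n v] at h2; exact h2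
  have hE2r : ∀ n (v : B n), A n (η n (δ n v)) = A n v - δ n v := by
    intro n v
    have h2 : A n (η n (δ n v)) = (δ n v + A n (η n (δ n v))) - δ n v := by abel
    rw [← hE2p n v] at h2; exact h2
  -- the master identity  dA + Ad + A ι π A = 0
  have hXp : ∀ n (v : B n), dB (n+1) (A n v) + A (n+1) (dB n v)
      + A (n+1) (ι (n+1) (π (n+1) (A n v))) = 0 := by
    intro n v
    obtain ⟨w, h2, h3⟩ : ∃ w, A n v = δ n w ∧ v = w - η n (δ n w) := by
      refine ⟨v + η n (A n v), by rw [map_add]; exact hE1p n v, ?_⟩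
      rw [map_add, ← hE1p n v]; abel
    have h6 : dB (n+1) (δ n w) = -(δ (n+1) (dB n w + δ n w)) := by
      have h := hd4p n w
      rw [map_add]
      have h2' : dB (n+1) (δ n w) = (dB (n+1) (δ n w) + δ (n+1) (dB n w) + δ (n+1) (δ n w))
          - δ (n+1) (dB n w) - δ (n+1) (δ n w) := by abel
      rw [h] at h2'; rw [h2']; abel
    have h7 : A (n+1) (dB n w) = δ (n+1) (dB n w + δ n w)
        + A (n+1) (η (n+1) (δ (n+1) (dB n w + δ n w))) - A (n+1) (δ n w) := by
      rw [eq_sub_iff_add_eq, ← map_add]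
      exact hE2p (n+1) (dB n w + δ n w)
    rw [h2]
    conv_lhs => rw [h3]
    rw [map_sub, map_sub, hηp n (δ n w), h6]
    rw [h7]
    simp only [map_add, map_neg, map_sub]
    abel
  have hXr : ∀ n (v : B n), A (n+1) (ι (n+1) (π (n+1) (A n v)))
      = -(dB (n+1) (A n v)) - A (n+1) (dB n v) := by
    intro n v
    have h := hXp n v
    have h2 : A (n+1) (ι (n+1) (π (n+1) (A n v)))
        = (dB (n+1) (A n v) + A (n+1) (dB n v) + A (n+1) (ι (n+1) (π (n+1) (A n v))))
          - dB (n+1) (A n v) - A (n+1) (dB n v) := by abel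
    rw [h] at h2; rw [h2]; abel
  -- chain map property of ι'
  have hI2 : ∀ n, (dB n + δ n) ∘ₗ (ι n + η n ∘ₗ A n ∘ₗ ι n)
      = (ι (n+1) + η (n+1) ∘ₗ A (n+1) ∘ₗ ι (n+1)) ∘ₗ (dS n + π (n+1) ∘ₗ A n ∘ₗ ι n) := by
    intro n
    ext v
    simp only [LinearMap.comp_apply, LinearMap.add_apply, map_add]
    rw [hXr n (ι n v), hηp n (A n (ι n v)), ← hιp n v, hE1r n (ι n v)]
    simp only [map_add, map_sub, map_neg]
    abel
  -- chain map property of π'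
  have hI1 : ∀ n, (dS (n+1) + π (n+1+1) ∘ₗ A (n+1) ∘ₗ ι (n+1)) ∘ₗ (π (n+1) + π (n+1) ∘ₗ A n ∘ₗ η n)
      = (π (n+1+1) + π (n+1+1) ∘ₗ A (n+1) ∘ₗ η (n+1)) ∘ₗ (dB (n+1) + δ (n+1)) := by
    intro n
    ext v
    simp only [LinearMap.comp_apply, LinearMap.add_apply, map_add]
    rw [hπp (n+1) v, hπp (n+1) (A n (η n v)), hXr n (η n v), hηp n v,
      hE2r (n+1) v]
    simp only [map_add, map_sub, map_neg]
    abel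
  -- the homotopy  ι' ∘ π' = 1 + D η' + η' D
  have hI3 : ∀ n, (ι (n+1) + η (n+1) ∘ₗ A (n+1) ∘ₗ ι (n+1)) ∘ₗ (π (n+1) + π (n+1) ∘ₗ A n ∘ₗ η n)
      = LinearMap.id + (dB n + δ n) ∘ₗ (η n + η n ∘ₗ A n ∘ₗ η n)
        + (η (n+1) + η (n+1) ∘ₗ A (n+1) ∘ₗ η (n+1)) ∘ₗ (dB (n+1) + δ (n+1)) := by
    intro n
    ext v
    simp only [LinearMap.comp_apply, LinearMap.add_apply, LinearMap.id_apply, map_add]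
    rw [hXr n (η n v), hηp n v, hηp n (A n (η n v)), hE1r n (η n v), hE2r (n+1) v]
    simp only [map_add, map_sub, map_neg]
    abel
  -- injectivity on cohomology of ι' (the mapping cone chase)
  have hinj : ∀ (n : ℤ) (x : S (n+1)),
      (dS (n+1) + π (n+1+1) ∘ₗ A (n+1) ∘ₗ ι (n+1)) x = 0 →
      (∃ z : B n, (ι (n+1) + η (n+1) ∘ₗ A (n+1) ∘ₗ ι (n+1)) x = (dB n + δ n) z) →
      ∃ w : S n, x = (dS n + π (n+1) ∘ₗ A n ∘ₗ ι n) w := by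
    intro n x hx hz
    obtain ⟨z, hz⟩ := hz
    obtain ⟨m, rfl⟩ : ∃ m, n = m + 1 := ⟨n - 1, by omega⟩
    simp only [LinearMap.add_apply, LinearMap.comp_apply] at hx hz
    have stepA : A (m+1+1) (ι (m+1+1) x) = -(dB (m+1+1) (δ (m+1) z)) := by
      have h1 : A (m+1+1) (ι (m+1+1) x)
          = δ (m+1+1) (ι (m+1+1) x + η (m+1+1) (A (m+1+1) (ι (m+1+1) x))) := by
        rw [map_add]; exact hE1p (m+1+1) (ι (m+1+1) x)
      rw [h1, hz, map_add]
      have h := hd4p (m+1) z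
      have h2 : δ (m+1+1) (dB (m+1) z) + δ (m+1+1) (δ (m+1) z)
          = (dB (m+1+1) (δ (m+1) z) + δ (m+1+1) (dB (m+1) z) + δ (m+1+1) (δ (m+1) z))
            - dB (m+1+1) (δ (m+1) z) := by abel
      rw [h] at h2; rw [h2]; abel
    have hxd : dS (m+1+1) x = π (m+1+1+1) (dB (m+1+1) (δ (m+1) z)) := by
      have h2 : dS (m+1+1) x = (dS (m+1+1) x + π (m+1+1+1) (A (m+1+1) (ι (m+1+1) x)))
          - π (m+1+1+1) (A (m+1+1) (ι (m+1+1) x)) := by abel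
      rw [hx, stepA] at h2
      simp only [map_neg, zero_sub, neg_neg] at h2
      exact h2
    have stepB : dS (m+1+1) (x - π (m+1+1) (δ (m+1) z)) = 0 := by
      rw [map_sub, hxd, hπp (m+1+1) (δ (m+1) z)]; abel
    have stepC : ι (m+1+1) (x - π (m+1+1) (δ (m+1) z))
        = dB (m+1) (z - η (m+1) (δ (m+1) z)) := by
      have hιx : ι (m+1+1) x
          = dB (m+1) z + δ (m+1) z + η (m+1+1) (dB (m+1+1) (δ (m+1) z)) := by
        have h2 : ι (m+1+1) x = (ι (m+1+1) x + η (m+1+1) (A (m+1+1) (ι (m+1+1) x)))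
            - η (m+1+1) (A (m+1+1) (ι (m+1+1) x)) := by abel
        rw [hz, stepA] at h2
        simp only [map_neg, sub_neg_eq_add] at h2
        exact h2
      simp only [map_sub]
      rw [hιx, hηp (m+1) (δ (m+1) z)]
      abel
    obtain ⟨w₀, hw₀⟩ := hιq.2 (m+1) (x - π (m+1+1) (δ (m+1) z)) stepB
      ⟨z - η (m+1) (δ (m+1) z), stepC⟩
    have hu : dB (m+1) (ι (m+1) w₀ - (z - η (m+1) (δ (m+1) z))) = 0 := by
      rw [map_sub, hιp (m+1) w₀, ← hw₀, stepC]; abel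
    obtain ⟨x₁, hx₁, y₁, hy₁⟩ := hιq.1 m _ hu
    dsimp only at hy₁
    refine ⟨w₀ - x₁ - π (m+1) (A m y₁), ?_⟩
    simp only [LinearMap.add_apply, LinearMap.comp_apply]
    have hιw' : ι (m+1) (w₀ - x₁ - π (m+1) (A m y₁))
        = (z - η (m+1) (δ (m+1) z)) - dB m y₁ - ι (m+1) (π (m+1) (A m y₁)) := by
      simp only [map_sub]
      rw [hy₁]; abel
    rw [hιw']
    simp only [map_sub]
    rw [hE2r (m+1) z, hXr m y₁, ← hw₀, hx₁, hπp (m+1) (A m y₁)]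
    simp only [map_sub, map_neg, map_zero]
    abel
  -- now the four statements
  refine ⟨⟨?_, ?_⟩, ?_, ?_⟩
  · -- surjectivity of ι' on cohomology
    intro n y hy
    dsimp only at hy ⊢
    refine ⟨(π (n+1) + π (n+1) ∘ₗ A n ∘ₗ η n) y, ?_, ⟨(η n + η n ∘ₗ A n ∘ₗ η n) y, ?_⟩⟩
    · have h := LinearMap.congr_fun (hI1 n) y
      simp only [LinearMap.comp_apply] at h
      rw [hy, map_zero] at h
      exact h
    · have h := LinearMap.congr_fun (hI3 n) y
      simp only [LinearMap.add_apply] at hy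
      simp only [LinearMap.comp_apply, LinearMap.add_apply, LinearMap.id_apply] at h ⊢
      rw [hy] at h
      simp only [map_zero, add_zero] at h
      exact h
  · -- injectivity of ι' on cohomology
    intro n x hx hz
    exact hinj n x hx hz
  · -- surjectivity of π' on cohomology
    intro n y hy
    dsimp only at hy ⊢
    refine ⟨(ι (n+1) + η (n+1) ∘ₗ A (n+1) ∘ₗ ι (n+1)) y, ?_, ?_⟩
    · have h := LinearMap.congr_fun (hI2 (n+1)) y
      simp only [LinearMap.comp_apply] at h
      rw [hy, map_zero] at h
      exact h
    · -- use the homotopy and hinj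
      have hDx : (dB (n+1) + δ (n+1)) ((ι (n+1) + η (n+1) ∘ₗ A (n+1) ∘ₗ ι (n+1)) y) = 0 := by
        have h := LinearMap.congr_fun (hI2 (n+1)) y
        simp only [LinearMap.comp_apply] at h
        rw [hy, map_zero] at h
        exact h
      have ht1 : (dS (n+1) + π (n+1+1) ∘ₗ A (n+1) ∘ₗ ι (n+1))
          ((π (n+1) + π (n+1) ∘ₗ A n ∘ₗ η n)
            ((ι (n+1) + η (n+1) ∘ₗ A (n+1) ∘ₗ ι (n+1)) y) - y) = 0 := by
        rw [map_sub]
        have h1 := LinearMap.congr_fun (hI1 n) ((ι (n+1) + η (n+1) ∘ₗ A (n+1) ∘ₗ ι (n+1)) y)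
        simp only [LinearMap.comp_apply] at h1
        rw [hDx, map_zero] at h1
        rw [h1, hy]
        abel
      have ht2 : (ι (n+1) + η (n+1) ∘ₗ A (n+1) ∘ₗ ι (n+1))
          ((π (n+1) + π (n+1) ∘ₗ A n ∘ₗ η n)
            ((ι (n+1) + η (n+1) ∘ₗ A (n+1) ∘ₗ ι (n+1)) y) - y)
          = (dB n + δ n) ((η n + η n ∘ₗ A n ∘ₗ η n)
            ((ι (n+1) + η (n+1) ∘ₗ A (n+1) ∘ₗ ι (n+1)) y)) := by
        have h3 := LinearMap.congr_fun (hI3 n) ((ι (n+1) + η (n+1) ∘ₗ A (n+1) ∘ₗ ι (n+1)) y)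
        simp only [LinearMap.comp_apply, LinearMap.add_apply, LinearMap.id_apply] at h3
        have hDxf := hDx
        simp only [LinearMap.add_apply, LinearMap.comp_apply] at hDxf
        rw [hDxf] at h3
        simp only [map_zero, add_zero] at h3
        simp only [LinearMap.comp_apply, LinearMap.add_apply, map_sub]
        rw [h3]
        abel
      obtain ⟨w, hw⟩ := hinj n _ ht1 ⟨_, ht2⟩
      refine ⟨w, ?_⟩
      rw [← hw]
      abel
  · -- injectivity of π' on cohomology
    intro n x hx hz
    obtain ⟨z, hz⟩ := hz
    dsimp only at hx hz ⊢
    refine ⟨(ι n + η n ∘ₗ A n ∘ₗ ι n) z - (η n + η n ∘ₗ A n ∘ₗ η n) x, ?_⟩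
    have h3 := LinearMap.congr_fun (hI3 n) x
    simp only [LinearMap.comp_apply, LinearMap.add_apply, LinearMap.id_apply] at h3
    simp only [LinearMap.add_apply] at hx
    rw [hx] at h3
    simp only [map_zero, add_zero] at h3
    have h2 := LinearMap.congr_fun (hI2 n) z
    simp only [LinearMap.comp_apply, LinearMap.add_apply] at h2
    simp only [LinearMap.add_apply, LinearMap.comp_apply] at hz
    rw [← hz] at h2
    rw [h3] at h2
    have hfin : x = ((dB n) ((ι n) z + (η n) ((A n) ((ι n) z)))
        + (δ n) ((ι n) z + (η n) ((A n) ((ι n) z))))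
        - (dB n) ((η n) x + (η n) ((A n) ((η n) x)))
        - (δ n) ((η n) x + (η n) ((A n) ((η n) x))) := by
      rw [h2]; abel
    simp only [LinearMap.add_apply, LinearMap.comp_apply, map_sub]
    exact hfin.trans (by abel)
end

section
/- Corollary (HPL for double complexes, paper's Corollary in Appendix B): Let (C^{j,k})_{j,k≥0} be a first-quadrant double complex of R-modules with horizontal differential h and vertical differential v, equipped with a column-wise contraction (ι, π, η) onto a bigraded module S. Then h∘η is locally nilpotent on the totalization Tot(C), id − h∘η is invertible, and, setting α = (id − h∘η)^{−1}∘h = Σ_{m≥0} (h∘η)^m∘h: (i) π∘α∘ι is a square-zero differential on Tot(S); (ii) the maps ι + η∘α∘ι and π + π∘α∘η are chain maps between (Tot(S), π∘α∘ι) and (Tot(C), h+v); (iii) these chain maps are quasi-isomorphisms; and (iv) (ι + η∘α∘ι)∘(π + π∘α∘η) = id + (h+v)∘η′ + η′∘(h+v) where η′ = η + η∘α∘η. -/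
/-!
Statement 5: Homological perturbation lemma for first-quadrant double complexes
(the paper's Corollary in Appendix B).

Let `(C^{j,k})_{j,k ≥ 0}` be a first-quadrant double complex of `R`-modules with
horizontal differential `h`, vertical differential `v` (`h² = 0`, `v² = 0`,
`hv + vh = 0`), equipped with a column-wise contraction `(ι, π, η)` onto a bigraded
module `S` (with zero vertical differential): `v∘ι = 0`, `π∘v = 0`, each column map is a
quasi-isomorphism for the vertical differential, and `ι∘π = id + v∘η + η∘v`.
Then `h∘η` is locally nilpotent on the totalization `Tot(C)`, `id − h∘η` is invertible,
and, with `α = (id − h∘η)⁻¹∘h`: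
(i) `π∘α∘ι` is a square-zero differential on `Tot(S)`;
(ii) `ι + η∘α∘ι` and `π + π∘α∘η` are chain maps between `(Tot(S), π∘α∘ι)` and
     `(Tot(C), h+v)`;
(iii) these chain maps are quasi-isomorphisms; and
(iv) `(ι + η∘α∘ι)∘(π + π∘α∘η) = id + (h+v)∘η' + η'∘(h+v)` where `η' = η + η∘α∘η`.
-/

universe u v₁

open DirectSum

/-- Index set of the total-degree-`n` part of a ℤ-bigraded object. -/
abbrev TotIdx (n : ℤ) : Type := { p : ℤ × ℤ // p.1 + p.2 = n }

/-- Total-degree-`n` module `Totⁿ = ⊕_{j+k=n} C^{j,k}` of a bigraded family. -/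
abbrev Tot (C : ℤ → ℤ → Type v₁) [∀ j k, AddCommGroup (C j k)] (n : ℤ) :=
  ⨁ p : TotIdx n, C p.1.1 p.1.2

/-- Inclusion of the `(j,k)` component into the total-degree-`n` module. -/
noncomputable def toTot (R : Type u) [Ring R] (C : ℤ → ℤ → Type v₁)
    [∀ j k, AddCommGroup (C j k)] [∀ j k, Module R (C j k)]
    (j k n : ℤ) (hn : j + k = n) : C j k →ₗ[R] Tot C n :=
  DirectSum.lof R (TotIdx n) (fun p => C p.1.1 p.1.2) ⟨(j, k), hn⟩

/-- Build a linear map out of the total-degree-`n` module from componentwise data. -/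
noncomputable def totMk (R : Type u) [Ring R] (C D : ℤ → ℤ → Type v₁)
    [∀ j k, AddCommGroup (C j k)] [∀ j k, Module R (C j k)]
    [∀ j k, AddCommGroup (D j k)] [∀ j k, Module R (D j k)]
    (n m : ℤ) (g : ∀ j k : ℤ, j + k = n → (C j k →ₗ[R] Tot D m)) :
    Tot C n →ₗ[R] Tot D m :=
  DirectSum.toModule R (TotIdx n) (Tot D m) fun p => g p.1.1 p.1.2 p.2

/-- Transport along equalities of the two indices of a bigraded family. -/
noncomputable def lcast (R : Type u) [Ring R] (C : ℤ → ℤ → Type v₁)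
    [∀ j k, AddCommGroup (C j k)] [∀ j k, Module R (C j k)]
    {j j' k k' : ℤ} (hj : j = j') (hk : k = k') : C j k →ₗ[R] C j' k' := by
  subst hj; subst hk; exact LinearMap.id


/-! ### Auxiliary infrastructure -/

section Infra

variable (R : Type u) [Ring R]
variable (C : ℤ → ℤ → Type v₁) [∀ j k, AddCommGroup (C j k)] [∀ j k, Module R (C j k)]
variable (D : ℤ → ℤ → Type v₁) [∀ j k, AddCommGroup (D j k)] [∀ j k, Module R (D j k)]

lemma lcast_rfl (j k : ℤ) : lcast R C (rfl : j = j) (rfl : k = k) = LinearMap.id := rfl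

lemma lcast_lcast {j j' j'' k k' k'' : ℤ} (hj : j = j') (hk : k = k')
    (hj' : j' = j'') (hk' : k' = k'') (x : C j k) :
    lcast R C hj' hk' (lcast R C hj hk x) = lcast R C (hj.trans hj') (hk.trans hk') x := by
  subst hj; subst hk; subst hj'; subst hk'; rfl

lemma lcast_comm (f : ∀ j k, C j k →ₗ[R] D j k) {j j' k k' : ℤ} (hj : j = j') (hk : k = k')
    (x : C j k) : f j' k' (lcast R C hj hk x) = lcast R D hj hk (f j k x) := by
  subst hj; subst hk; rfl

lemma tot_ext {n : ℤ} {N : Type*} [AddCommGroup N] [Module R N] ⦃f g : Tot C n →ₗ[R] N⦄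
    (H : ∀ (j k : ℤ) (hn : j + k = n),
      f ∘ₗ toTot R C j k n hn = g ∘ₗ toTot R C j k n hn) : f = g := by
  apply DirectSum.linearMap_ext
  rintro ⟨⟨j, k⟩, hn⟩
  exact H j k hn

lemma totMk_toTot_apply {n m j k : ℤ} (hn : j + k = n)
    (g : ∀ j k : ℤ, j + k = n → (C j k →ₗ[R] Tot D m)) (c : C j k) :
    totMk R C D n m g (toTot R C j k n hn c) = g j k hn c := by
  simp [totMk, toTot, DirectSum.toModule_lof]

lemma toTot_lcast_apply {j j' k k' n : ℤ} (hj : j = j') (hk : k = k') (hn : j' + k' = n)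
    (c : C j k) :
    toTot R C j' k' n hn (lcast R C hj hk c) = toTot R C j k n (by omega) c := by
  subst hj; subst hk; rfl

/-- The submodule of `Tot C n` of elements supported in columns `≥ p`. -/
def Fsub (n p : ℤ) : Submodule R (Tot C n) where
  carrier := {x | ∀ q : TotIdx n, q.1.1 < p → x q = 0}
  add_mem' := by
    intro a b ha hb q hq
    rw [DirectSum.add_apply, ha q hq, hb q hq, add_zero]
  zero_mem' := by intro q _; rfl
  smul_mem' := by
    intro c x hx q hq
    rw [DFinsupp.smul_apply, hx q hq, smul_zero]

lemma mem_Fsub_mono {n p p' : ℤ} (hp : p ≤ p') {x : Tot C n} (hx : x ∈ Fsub R C n p') :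
    x ∈ Fsub R C n p := fun q hq => hx q (lt_of_lt_of_le hq hp)

lemma mem_Fsub_zero (hfq : ∀ j k : ℤ, j < 0 ∨ k < 0 → Subsingleton (C j k)) {n : ℤ}
    (x : Tot C n) : x ∈ Fsub R C n 0 := by
  intro q hq
  have : Subsingleton (C q.1.1 q.1.2) := hfq q.1.1 q.1.2 (Or.inl hq)
  exact Subsingleton.elim _ _

lemma eq_zero_of_mem_Fsub (hfq : ∀ j k : ℤ, j < 0 ∨ k < 0 → Subsingleton (C j k))
    {n p : ℤ} (hp : n < p) {x : Tot C n} (hx : x ∈ Fsub R C n p) : x = 0 := by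
  apply DFinsupp.ext
  intro q
  by_cases hq : q.1.1 < p
  · exact (hx q hq).trans rfl
  · have hk : q.1.2 < 0 := by have := q.2; omega
    have : Subsingleton (C q.1.1 q.1.2) := hfq q.1.1 q.1.2 (Or.inr hk)
    exact Subsingleton.elim _ _

lemma toTot_mem_Fsub {j k n p : ℤ} (hn : j + k = n) (hp : p ≤ j) (c : C j k) :
    toTot R C j k n hn c ∈ Fsub R C n p := by
  classical
  intro q hq
  have hne : (⟨(j, k), hn⟩ : TotIdx n) ≠ q := by
    intro e
    rw [← e] at hq
    simp at hq
    omega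
  exact DirectSum.of_eq_of_ne _ _ _ hne.symm

/-- `T` raises the column filtration by `e`. -/
def FiltMap (n e : ℤ) (T : Tot C n →ₗ[R] Tot D n) : Prop :=
  ∀ p : ℤ, ∀ x ∈ Fsub R C n p, T x ∈ Fsub R D n (p + e)

lemma filt_mono {n e e' : ℤ} {T : Tot C n →ₗ[R] Tot D n} (h : e' ≤ e)
    (hT : FiltMap R C D n e T) : FiltMap R C D n e' T :=
  fun p x hx => mem_Fsub_mono R D (by omega) (hT p x hx)

lemma filt_zero (n e : ℤ) : FiltMap R C D n e (0 : Tot C n →ₗ[R] Tot D n) := by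
  intro p x _
  rw [LinearMap.zero_apply]
  exact Submodule.zero_mem _

lemma filt_add {n e : ℤ} {T T' : Tot C n →ₗ[R] Tot D n} (hT : FiltMap R C D n e T)
    (hT' : FiltMap R C D n e T') : FiltMap R C D n e (T + T') := by
  intro p x hx
  rw [LinearMap.add_apply]
  exact Submodule.add_mem _ (hT p x hx) (hT' p x hx)

lemma filt_neg {n e : ℤ} {T : Tot C n →ₗ[R] Tot D n} (hT : FiltMap R C D n e T) :
    FiltMap R C D n e (-T) := by
  intro p x hx
  rw [LinearMap.neg_apply]
  exact Submodule.neg_mem _ (hT p x hx)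

end Infra

section Infra2

variable (R : Type u) [Ring R]
variable (C : ℤ → ℤ → Type v₁) [∀ j k, AddCommGroup (C j k)] [∀ j k, Module R (C j k)]
variable (D : ℤ → ℤ → Type v₁) [∀ j k, AddCommGroup (D j k)] [∀ j k, Module R (D j k)]
variable (E : ℤ → ℤ → Type v₁) [∀ j k, AddCommGroup (E j k)] [∀ j k, Module R (E j k)]

lemma filt_comp {n e e' : ℤ} {T : Tot C n →ₗ[R] Tot D n} {T' : Tot D n →ₗ[R] Tot E n}
    (hT : FiltMap R C D n e T) (hT' : FiltMap R D E n e' T') :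
    FiltMap R C E n (e + e') (T' ∘ₗ T) := by
  intro p x hx
  rw [LinearMap.comp_apply]
  exact mem_Fsub_mono R E (by omega) (hT' (p + e) (T x) (hT p x hx))

lemma filt_id (n : ℤ) : FiltMap R C C n 0 LinearMap.id := by
  intro p x hx
  exact mem_Fsub_mono R C (by omega) hx

lemma filt_one (n : ℤ) : FiltMap R C C n 0 (1 : Module.End R (Tot C n)) :=
  filt_id R C n

lemma filt_of_component {n e : ℤ} {T : Tot C n →ₗ[R] Tot D n}
    (hT : ∀ (j k : ℤ) (hn : j + k = n) (c : C j k),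
      T (toTot R C j k n hn c) ∈ Fsub R D n (j + e)) :
    FiltMap R C D n e T := by
  classical
  intro p x hx
  rw [← DirectSum.sum_support_of x, map_sum]
  apply Submodule.sum_mem
  rintro ⟨⟨j, k⟩, hn⟩ hq
  by_cases hj : j < p
  · have : x ⟨(j, k), hn⟩ = 0 := hx _ hj
    rw [show (DirectSum.of (fun p : TotIdx n => C p.1.1 p.1.2) ⟨(j, k), hn⟩
        (x ⟨(j, k), hn⟩)) = 0 by rw [this]; exact map_zero _, map_zero]
    exact Submodule.zero_mem _
  · exact mem_Fsub_mono R D (by omega) (hT j k hn (x ⟨(j, k), hn⟩))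

lemma filt_pow {n : ℤ} {T : Module.End R (Tot C n)} (hT : FiltMap R C C n 1 T) :
    ∀ m : ℕ, FiltMap R C C n m (T ^ m) := by
  intro m
  induction m with
  | zero => simpa using filt_one R C n
  | succ m ih =>
      have := filt_comp R C C C hT ih
      rw [(pow_succ T m).trans (Module.End.mul_eq_comp _ _)]
      exact filt_mono R C C (by push_cast; omega) this

lemma filt_nilpotent (hfq : ∀ j k : ℤ, j < 0 ∨ k < 0 → Subsingleton (C j k)) {n : ℤ}
    {T : Module.End R (Tot C n)} (hT : FiltMap R C C n 1 T) :
    T ^ (n.toNat + 1) = 0 := by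
  apply LinearMap.ext
  intro x
  have h0 := mem_Fsub_zero R C hfq (n := n) x
  have h1 := filt_pow R C hT (n.toNat + 1) 0 x h0
  rw [LinearMap.zero_apply]
  apply eq_zero_of_mem_Fsub R C hfq _ h1
  have := Int.self_le_toNat n
  push_cast
  omega

lemma ring_inverse_geom {A : Type*} [Ring A] {T : A} {N : ℕ} (hN : T ^ N = 0) :
    IsUnit (1 - T) ∧ Ring.inverse (1 - T) = ∑ i ∈ Finset.range N, T ^ i := by
  have h1 : (∑ i ∈ Finset.range N, T ^ i) * (1 - T) = 1 := by
    have hg := geom_sum_mul T N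
    rw [hN] at hg
    have : (∑ i ∈ Finset.range N, T ^ i) * (1 - T)
        = -((∑ i ∈ Finset.range N, T ^ i) * (T - 1)) := by noncomm_ring
    rw [this, hg, zero_sub, neg_neg]
  have h2 : (1 - T) * (∑ i ∈ Finset.range N, T ^ i) = 1 := by
    have hg := mul_geom_sum T N
    rw [hN] at hg
    have : (1 - T) * (∑ i ∈ Finset.range N, T ^ i)
        = -((T - 1) * (∑ i ∈ Finset.range N, T ^ i)) := by noncomm_ring
    rw [this, hg, zero_sub, neg_neg]
  have hu : IsUnit (1 - T) := ⟨⟨1 - T, _, h2, h1⟩, rfl⟩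
  refine ⟨hu, ?_⟩
  calc Ring.inverse (1 - T) = Ring.inverse (1 - T) * ((1 - T) * ∑ i ∈ Finset.range N, T ^ i) := by
        rw [h2, mul_one]
    _ = (Ring.inverse (1 - T) * (1 - T)) * ∑ i ∈ Finset.range N, T ^ i := by rw [mul_assoc]
    _ = ∑ i ∈ Finset.range N, T ^ i := by rw [Ring.inverse_mul_cancel _ hu, one_mul]

lemma filt_ring_inverse (hfq : ∀ j k : ℤ, j < 0 ∨ k < 0 → Subsingleton (C j k)) {n : ℤ}
    {T : Module.End R (Tot C n)} (hT : FiltMap R C C n 1 T) :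
    FiltMap R C C n 0 (Ring.inverse (1 - T)) := by
  have hnil := filt_nilpotent R C hfq hT
  rw [(ring_inverse_geom hnil).2]
  have : ∀ m : ℕ, FiltMap R C C n 0 (T ^ m) := fun m =>
    filt_mono R C C (by positivity) (filt_pow R C hT m)
  classical
  induction (Finset.range (n.toNat + 1)) using Finset.induction with
  | empty => simpa using filt_zero R C C n 0
  | insert _ _ hx ih =>
      rw [Finset.sum_insert hx]
      exact filt_add R C C (this _) ih

end Infra2

section

variable (R : Type u) [Ring R]
variable (C : ℤ → ℤ → Type v₁) [∀ j k, AddCommGroup (C j k)] [∀ j k, Module R (C j k)]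
variable (S : ℤ → ℤ → Type v₁) [∀ j k, AddCommGroup (S j k)] [∀ j k, Module R (S j k)]
variable (h : ∀ j k : ℤ, C j k →ₗ[R] C (j + 1) k)
variable (v : ∀ j k : ℤ, C j k →ₗ[R] C j (k + 1))
variable (η : ∀ j k : ℤ, C j k →ₗ[R] C j (k - 1))
variable (ι : ∀ j k : ℤ, S j k →ₗ[R] C j k)
variable (π : ∀ j k : ℤ, C j k →ₗ[R] S j k)

/-- The horizontal differential on totalizations. -/
noncomputable def hTot (n m : ℤ) (_ : n + 1 = m) : Tot C n →ₗ[R] Tot C m :=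
  totMk R C C n m fun j k hjk => toTot R C (j + 1) k m (by omega) ∘ₗ h j k

/-- The vertical differential on totalizations. -/
noncomputable def vTot (n m : ℤ) (_ : n + 1 = m) : Tot C n →ₗ[R] Tot C m :=
  totMk R C C n m fun j k hjk => toTot R C j (k + 1) m (by omega) ∘ₗ v j k

/-- The total differential `h + v` on the totalization `Tot(C)`. -/
noncomputable def dTot (n : ℤ) : Tot C n →ₗ[R] Tot C (n + 1) :=
  hTot R C h n (n + 1) rfl + vTot R C v n (n + 1) rfl

/-- The homotopy `η` on totalizations. -/
noncomputable def etaTot (n m : ℤ) (_ : m + 1 = n) : Tot C n →ₗ[R] Tot C m :=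
  totMk R C C n m fun j k hjk => toTot R C j (k - 1) m (by omega) ∘ₗ η j k

/-- `ι` on totalizations. -/
noncomputable def iotaTot (n : ℤ) : Tot S n →ₗ[R] Tot C n :=
  totMk R S C n n fun j k hjk => toTot R C j k n hjk ∘ₗ ι j k

/-- `π` on totalizations. -/
noncomputable def piTot (n : ℤ) : Tot C n →ₗ[R] Tot S n :=
  totMk R C S n n fun j k hjk => toTot R S j k n hjk ∘ₗ π j k

/-- The staircase operator `h∘η` on `Tot(C)` in degree `n`. -/
noncomputable def Phi (n : ℤ) : Module.End R (Tot C n) :=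
  hTot R C h (n - 1) n (by omega) ∘ₗ etaTot R C η n (n - 1) (by omega)

/-- `α = (id − h∘η)⁻¹ ∘ h = Σ_{m≥0} (h∘η)^m ∘ h` on totalizations. -/
noncomputable def alphaTot (n m : ℤ) (hnm : n + 1 = m) : Tot C n →ₗ[R] Tot C m :=
  (Ring.inverse ((1 : Module.End R (Tot C m)) - Phi R C h η m) : Module.End R (Tot C m))
    ∘ₗ hTot R C h n m hnm

/-- The transferred differential `π∘α∘ι` on `Tot(S)`. -/
noncomputable def dSTot (n : ℤ) : Tot S n →ₗ[R] Tot S (n + 1) :=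
  piTot R C S π (n + 1) ∘ₗ alphaTot R C h η n (n + 1) rfl ∘ₗ iotaTot R C S ι n

/-- The perturbed inclusion `ι' = ι + η∘α∘ι`. -/
noncomputable def iotaTot' (n : ℤ) : Tot S n →ₗ[R] Tot C n :=
  iotaTot R C S ι n +
    etaTot R C η (n + 1) n rfl ∘ₗ alphaTot R C h η n (n + 1) rfl ∘ₗ iotaTot R C S ι n

/-- The perturbed projection `π' = π + π∘α∘η`. -/
noncomputable def piTot' (n : ℤ) : Tot C n →ₗ[R] Tot S n :=
  piTot R C S π n +
    piTot R C S π n ∘ₗ alphaTot R C h η (n - 1) n (by omega) ∘ₗ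
      etaTot R C η n (n - 1) (by omega)

/-- The perturbed homotopy `η' = η + η∘α∘η` (from degree `n + 1` to degree `n`). -/
noncomputable def etaTot' (n : ℤ) : Tot C (n + 1) →ₗ[R] Tot C n :=
  etaTot R C η (n + 1) n rfl +
    etaTot R C η (n + 1) n rfl ∘ₗ alphaTot R C h η n (n + 1) rfl ∘ₗ
      etaTot R C η (n + 1) n rfl

/-- `f` is a quasi-isomorphism between ℤ-indexed cochain complexes, given as families of
`R`-modules with differentials: it induces a bijection on cohomology in every degree
(stated elementwise in every degree `n + 1`, `n : ℤ`, which covers every degree). -/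
def IsQuasiIsoFam {X Y : ℤ → Type*} [∀ n, AddCommGroup (X n)] [∀ n, Module R (X n)]
    [∀ n, AddCommGroup (Y n)] [∀ n, Module R (Y n)]
    (dX : ∀ n : ℤ, X n →ₗ[R] X (n + 1)) (dY : ∀ n : ℤ, Y n →ₗ[R] Y (n + 1))
    (f : ∀ n : ℤ, X n →ₗ[R] Y n) : Prop :=
  (∀ (n : ℤ) (y : Y (n + 1)), dY (n + 1) y = 0 →
      ∃ x : X (n + 1), dX (n + 1) x = 0 ∧ ∃ z : Y n, f (n + 1) x = y + dY n z) ∧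
  (∀ (n : ℤ) (x : X (n + 1)), dX (n + 1) x = 0 → (∃ z : Y n, f (n + 1) x = dY n z) →
      ∃ w : X n, x = dX n w)


/-! ### Bundle of hypotheses -/

structure HPLHyp : Prop where
  hCfq : ∀ j k : ℤ, j < 0 ∨ k < 0 → Subsingleton (C j k)
  hSfq : ∀ j k : ℤ, j < 0 ∨ k < 0 → Subsingleton (S j k)
  hhh : ∀ j k : ℤ, h (j + 1) k ∘ₗ h j k = 0
  hvv : ∀ j k : ℤ, v j (k + 1) ∘ₗ v j k = 0
  hhv : ∀ j k : ℤ, h j (k + 1) ∘ₗ v j k + v (j + 1) k ∘ₗ h j k = 0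
  hvι : ∀ j k : ℤ, v j k ∘ₗ ι j k = 0
  hπv : ∀ j k : ℤ, π j (k + 1) ∘ₗ v j k = 0
  hcontr : ∀ j k : ℤ, ι j k ∘ₗ π j k =
      (LinearMap.id : C j k →ₗ[R] C j k)
        + lcast R C rfl (Int.sub_add_cancel k 1) ∘ₗ v j (k - 1) ∘ₗ η j k
        + lcast R C rfl (Int.add_sub_cancel k 1) ∘ₗ η j (k + 1) ∘ₗ v j k
  hcolι : ∀ j : ℤ, IsQuasiIsoFam R (fun k => (0 : S j k →ₗ[R] S j (k + 1))) (v j) (ι j)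
  hcolπ : ∀ j : ℤ, IsQuasiIsoFam R (v j) (fun k => (0 : S j k →ₗ[R] S j (k + 1))) (π j)

variable {R C S h v η ι π}

/-! ### Componentwise description of the totalized operators -/

lemma hTot_toTot {n m j k : ℤ} (hnm : n + 1 = m) (hn : j + k = n) (c : C j k) :
    hTot R C h n m hnm (toTot R C j k n hn c)
      = toTot R C (j + 1) k m (by omega) (h j k c) :=
  totMk_toTot_apply R C C hn _ c

lemma vTot_toTot {n m j k : ℤ} (hnm : n + 1 = m) (hn : j + k = n) (c : C j k) :
    vTot R C v n m hnm (toTot R C j k n hn c)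
      = toTot R C j (k + 1) m (by omega) (v j k c) :=
  totMk_toTot_apply R C C hn _ c

lemma etaTot_toTot {n m j k : ℤ} (hmn : m + 1 = n) (hn : j + k = n) (c : C j k) :
    etaTot R C η n m hmn (toTot R C j k n hn c)
      = toTot R C j (k - 1) m (by omega) (η j k c) :=
  totMk_toTot_apply R C C hn _ c

lemma iotaTot_toTot {n j k : ℤ} (hn : j + k = n) (s : S j k) :
    iotaTot R C S ι n (toTot R S j k n hn s) = toTot R C j k n hn (ι j k s) :=
  totMk_toTot_apply R S C hn _ s

lemma piTot_toTot {n j k : ℤ} (hn : j + k = n) (c : C j k) :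
    piTot R C S π n (toTot R C j k n hn c) = toTot R S j k n hn (π j k c) :=
  totMk_toTot_apply R C S hn _ c

/-! ### Lifted relations -/

lemma hTot_hTot (H : HPLHyp R C S h v η ι π) {n m p : ℤ} (h1 : n + 1 = m) (h2 : m + 1 = p) :
    hTot R C h m p h2 ∘ₗ hTot R C h n m h1 = 0 := by
  apply tot_ext; intro j k hn
  apply LinearMap.ext; intro c
  show hTot R C h m p h2 (hTot R C h n m h1 (toTot R C j k n hn c)) = 0
  have h0 : h (j + 1) k (h j k c) = 0 := LinearMap.congr_fun (H.hhh j k) c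
  rw [hTot_toTot h1 hn, hTot_toTot h2 (by omega), h0, map_zero]

lemma vTot_vTot (H : HPLHyp R C S h v η ι π) {n m p : ℤ} (h1 : n + 1 = m) (h2 : m + 1 = p) :
    vTot R C v m p h2 ∘ₗ vTot R C v n m h1 = 0 := by
  apply tot_ext; intro j k hn
  apply LinearMap.ext; intro c
  show vTot R C v m p h2 (vTot R C v n m h1 (toTot R C j k n hn c)) = 0
  have h0 : v j (k + 1) (v j k c) = 0 := LinearMap.congr_fun (H.hvv j k) c
  rw [vTot_toTot h1 hn, vTot_toTot h2 (by omega), h0, map_zero]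

lemma hTot_vTot (H : HPLHyp R C S h v η ι π) {n m m' p : ℤ}
    (h1 : n + 1 = m) (h2 : m + 1 = p) (h1' : n + 1 = m') (h2' : m' + 1 = p) :
    hTot R C h m p h2 ∘ₗ vTot R C v n m h1
      = - (vTot R C v m' p h2' ∘ₗ hTot R C h n m' h1') := by
  apply tot_ext; intro j k hn
  apply LinearMap.ext; intro c
  show hTot R C h m p h2 (vTot R C v n m h1 (toTot R C j k n hn c))
      = -(vTot R C v m' p h2' (hTot R C h n m' h1' (toTot R C j k n hn c)))
  have hc : h j (k + 1) (v j k c) + v (j + 1) k (h j k c) = 0 :=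
    LinearMap.congr_fun (H.hhv j k) c
  have h0 : h j (k + 1) (v j k c) = -(v (j + 1) k (h j k c)) :=
    eq_neg_of_add_eq_zero_left hc
  rw [vTot_toTot h1 hn, hTot_toTot h2 (by omega), h0, map_neg, hTot_toTot h1' hn,
    vTot_toTot h2' (by omega)]

lemma vTot_iotaTot (H : HPLHyp R C S h v η ι π) {n m : ℤ} (h1 : n + 1 = m) :
    vTot R C v n m h1 ∘ₗ iotaTot R C S ι n = 0 := by
  apply tot_ext; intro j k hn
  apply LinearMap.ext; intro s
  show vTot R C v n m h1 (iotaTot R C S ι n (toTot R S j k n hn s)) = 0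
  have h0 : v j k (ι j k s) = 0 := LinearMap.congr_fun (H.hvι j k) s
  rw [iotaTot_toTot hn, vTot_toTot h1 hn, h0, map_zero]

lemma piTot_vTot (H : HPLHyp R C S h v η ι π) {n m : ℤ} (h1 : n + 1 = m) :
    piTot R C S π m ∘ₗ vTot R C v n m h1 = 0 := by
  apply tot_ext; intro j k hn
  apply LinearMap.ext; intro c
  show piTot R C S π m (vTot R C v n m h1 (toTot R C j k n hn c)) = 0
  have h0 : π j (k + 1) (v j k c) = 0 := LinearMap.congr_fun (H.hπv j k) c
  rw [vTot_toTot h1 hn, piTot_toTot (by omega), h0, map_zero]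

lemma iotaTot_piTot (H : HPLHyp R C S h v η ι π) {n m m' : ℤ} (p : m + 1 = n) (q : n + 1 = m') :
    iotaTot R C S ι n ∘ₗ piTot R C S π n
      = LinearMap.id + vTot R C v m n p ∘ₗ etaTot R C η n m p
        + etaTot R C η m' n q ∘ₗ vTot R C v n m' q := by
  apply tot_ext; intro j k hn
  apply LinearMap.ext; intro c
  show iotaTot R C S ι n (piTot R C S π n (toTot R C j k n hn c))
      = toTot R C j k n hn c
        + vTot R C v m n p (etaTot R C η n m p (toTot R C j k n hn c))
        + etaTot R C η m' n q (vTot R C v n m' q (toTot R C j k n hn c))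
  have hc : ι j k (π j k c)
      = c + lcast R C rfl (by omega : k - 1 + 1 = k) (v j (k - 1) (η j k c))
          + lcast R C rfl (by omega : k + 1 - 1 = k) (η j (k + 1) (v j k c)) :=
    LinearMap.congr_fun (H.hcontr j k) c
  rw [piTot_toTot hn, iotaTot_toTot hn, hc, map_add, map_add,
    toTot_lcast_apply R C rfl (by omega : k - 1 + 1 = k) hn,
    toTot_lcast_apply R C rfl (by omega : k + 1 - 1 = k) hn,
    etaTot_toTot p hn, vTot_toTot (by omega : m + 1 = n) (by omega),
    vTot_toTot q hn, etaTot_toTot (by omega : n + 1 = m') (by omega)]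

lemma pi_iota_col (H : HPLHyp R C S h v η ι π) (j k : ℤ) :
    π j k ∘ₗ ι j k = LinearMap.id := by
  apply LinearMap.ext; intro s
  have e : k - 1 + 1 = k := by omega
  have hc : ι j k (π j k (ι j k s))
      = ι j k s + lcast R C rfl (by omega : k - 1 + 1 = k) (v j (k - 1) (η j k (ι j k s)))
          + lcast R C rfl (by omega : k + 1 - 1 = k) (η j (k + 1) (v j k (ι j k s))) :=
    LinearMap.congr_fun (H.hcontr j k) (ι j k s)
  have hv0 : v j k (ι j k s) = 0 := LinearMap.congr_fun (H.hvι j k) s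
  rw [hv0, map_zero, map_zero, add_zero] at hc
  have key : ι j k (π j k (ι j k s) - s)
      = lcast R C rfl e (v j (k - 1) (η j k (ι j k s))) := by
    rw [map_sub, hc]; abel
  set x : S j (k - 1 + 1) := lcast R S rfl e.symm (π j k (ι j k s) - s) with hxdef
  have hx : ι j (k - 1 + 1) x = v j (k - 1) (η j k (ι j k s)) := by
    rw [hxdef, lcast_comm R S C ι rfl e.symm, key, lcast_lcast, lcast_rfl]
    rfl
  obtain ⟨w, hw⟩ := (H.hcolι j).2 (k - 1) x rfl ⟨η j k (ι j k s), hx⟩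
  have hx0 : x = 0 := hw.trans rfl
  have h1 : π j k (ι j k s) - s = 0 := by
    have h2 := congrArg (lcast R S rfl e) hx0
    rw [hxdef, lcast_lcast, lcast_rfl, map_zero] at h2
    exact h2
  show π j k (ι j k s) = s
  rw [← sub_eq_zero]
  exact h1

lemma piTot_iotaTot (H : HPLHyp R C S h v η ι π) (n : ℤ) :
    piTot R C S π n ∘ₗ iotaTot R C S ι n = LinearMap.id := by
  apply tot_ext; intro j k hn
  apply LinearMap.ext; intro s
  show piTot R C S π n (iotaTot R C S ι n (toTot R S j k n hn s)) = toTot R S j k n hn s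
  have h0 : π j k (ι j k s) = s := LinearMap.congr_fun (pi_iota_col H j k) s
  rw [iotaTot_toTot hn, piTot_toTot hn, h0]


/-! ### End-ring helpers -/

section EndHelp

variable {M N : Type*} [AddCommGroup M] [Module R M] [AddCommGroup N] [Module R N]

lemma h_cancel_right (f : M →ₗ[R] N) {a b : Module.End R M} (hab : a ∘ₗ b = LinearMap.id) :
    (f ∘ₗ a) ∘ₗ b = f := by
  rw [LinearMap.comp_assoc, hab, LinearMap.comp_id]

lemma h_cancel_left {a b : Module.End R N} (hab : a ∘ₗ b = LinearMap.id) (f : M →ₗ[R] N) :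
    a ∘ₗ (b ∘ₗ f) = f := by
  rw [← LinearMap.comp_assoc, hab, LinearMap.id_comp]

lemma inverse_comp_self (u : Module.End R M) (hu : IsUnit u) :
    Ring.inverse u ∘ₗ u = LinearMap.id := by
  rw [← Module.End.mul_eq_comp, Ring.inverse_mul_cancel _ hu, Module.End.one_eq_id]

lemma self_comp_inverse (u : Module.End R M) (hu : IsUnit u) :
    u ∘ₗ Ring.inverse u = LinearMap.id := by
  rw [← Module.End.mul_eq_comp, Ring.mul_inverse_cancel _ hu, Module.End.one_eq_id]

lemma inverse_shift (f : M →ₗ[R] N) (a : Module.End R M) (b : Module.End R N)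
    (hua : IsUnit a) (hub : IsUnit b) (hcomm : b ∘ₗ f = f ∘ₗ a) :
    f ∘ₗ Ring.inverse a = Ring.inverse b ∘ₗ f := by
  have h1 : Ring.inverse b ∘ₗ ((b ∘ₗ f) ∘ₗ Ring.inverse a) = f ∘ₗ Ring.inverse a := by
    rw [LinearMap.comp_assoc,
      ← LinearMap.comp_assoc (f ∘ₗ Ring.inverse a) b (Ring.inverse b),
      inverse_comp_self b hub, LinearMap.id_comp]
  have h2 : Ring.inverse b ∘ₗ ((f ∘ₗ a) ∘ₗ Ring.inverse a) = Ring.inverse b ∘ₗ f := by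
    rw [LinearMap.comp_assoc (Ring.inverse a) a f, self_comp_inverse a hua, LinearMap.comp_id]
  rw [← h1, hcomm, h2]

end EndHelp

/-! ### The operators `Ψ`, `A = (1 - Φ)⁻¹`, `B = (1 - Ψ)⁻¹` -/

variable (R C h η)

/-- The staircase operator `η∘h` on `Tot(C)`. -/
noncomputable def PsiE (n : ℤ) : Module.End R (Tot C n) :=
  etaTot R C η (n + 1) n rfl ∘ₗ hTot R C h n (n + 1) rfl

/-- `A = (1 - h∘η)⁻¹`. -/
noncomputable def AEnd (n : ℤ) : Module.End R (Tot C n) :=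
  Ring.inverse (1 - Phi R C h η n)

/-- `B = (1 - η∘h)⁻¹`. -/
noncomputable def BEnd (n : ℤ) : Module.End R (Tot C n) :=
  Ring.inverse (1 - PsiE R C h η n)

variable {R C h η}

lemma Phi_eq {n m : ℤ} (p : m + 1 = n) :
    Phi R C h η n = hTot R C h m n p ∘ₗ etaTot R C η n m p := by
  obtain rfl : m = n - 1 := by omega
  rfl

lemma Psi_eq {n m : ℤ} (q : n + 1 = m) :
    PsiE R C h η n = etaTot R C η m n q ∘ₗ hTot R C h n m q := by
  obtain rfl : m = n + 1 := by omega
  rfl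

lemma phi_toTot {n j k : ℤ} (hn : j + k = n) (c : C j k) :
    Phi R C h η n (toTot R C j k n hn c)
      = toTot R C (j + 1) (k - 1) n (by omega) (h j (k - 1) (η j k c)) := by
  show hTot R C h (n - 1) n (by omega)
      (etaTot R C η n (n - 1) (by omega) (toTot R C j k n hn c)) = _
  rw [etaTot_toTot (by omega) hn, hTot_toTot (by omega) (by omega)]

lemma psi_toTot {n j k : ℤ} (hn : j + k = n) (c : C j k) :
    PsiE R C h η n (toTot R C j k n hn c)
      = toTot R C (j + 1) (k - 1) n (by omega) (η (j + 1) k (h j k c)) := by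
  show etaTot R C η (n + 1) n rfl (hTot R C h n (n + 1) rfl (toTot R C j k n hn c)) = _
  rw [hTot_toTot rfl hn, etaTot_toTot (by omega) (by omega)]

lemma phi_filt (n : ℤ) : FiltMap R C C n 1 (Phi R C h η n) := by
  apply filt_of_component
  intro j k hn c
  rw [phi_toTot hn]
  exact toTot_mem_Fsub R C _ (by omega) _

lemma psi_filt (n : ℤ) : FiltMap R C C n 1 (PsiE R C h η n) := by
  apply filt_of_component
  intro j k hn c
  rw [psi_toTot hn]
  exact toTot_mem_Fsub R C _ (by omega) _

lemma isUnit_one_sub_Phi (H : HPLHyp R C S h v η ι π) (n : ℤ) :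
    IsUnit (1 - Phi R C h η n) :=
  (ring_inverse_geom (filt_nilpotent R C H.hCfq (phi_filt n))).1

lemma isUnit_one_sub_Psi (H : HPLHyp R C S h v η ι π) (n : ℤ) :
    IsUnit (1 - PsiE R C h η n) :=
  (ring_inverse_geom (filt_nilpotent R C H.hCfq (psi_filt n))).1

lemma A_filt (H : HPLHyp R C S h v η ι π) (n : ℤ) : FiltMap R C C n 0 (AEnd R C h η n) :=
  filt_ring_inverse R C H.hCfq (phi_filt n)

lemma B_filt (H : HPLHyp R C S h v η ι π) (n : ℤ) : FiltMap R C C n 0 (BEnd R C h η n) :=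
  filt_ring_inverse R C H.hCfq (psi_filt n)

lemma A_comp_one_sub (H : HPLHyp R C S h v η ι π) (n : ℤ) :
    AEnd R C h η n ∘ₗ (1 - Phi R C h η n) = LinearMap.id :=
  inverse_comp_self _ (isUnit_one_sub_Phi H n)

lemma one_sub_comp_A (H : HPLHyp R C S h v η ι π) (n : ℤ) :
    (1 - Phi R C h η n) ∘ₗ AEnd R C h η n = LinearMap.id :=
  self_comp_inverse _ (isUnit_one_sub_Phi H n)

lemma B_comp_one_sub (H : HPLHyp R C S h v η ι π) (n : ℤ) :
    BEnd R C h η n ∘ₗ (1 - PsiE R C h η n) = LinearMap.id :=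
  inverse_comp_self _ (isUnit_one_sub_Psi H n)

lemma one_sub_comp_B (H : HPLHyp R C S h v η ι π) (n : ℤ) :
    (1 - PsiE R C h η n) ∘ₗ BEnd R C h η n = LinearMap.id :=
  self_comp_inverse _ (isUnit_one_sub_Psi H n)

lemma A_mul_phi (H : HPLHyp R C S h v η ι π) (n : ℤ) :
    AEnd R C h η n * Phi R C h η n = AEnd R C h η n - 1 := by
  have h1 : AEnd R C h η n * (1 - Phi R C h η n) = 1 :=
    Ring.inverse_mul_cancel _ (isUnit_one_sub_Phi H n)
  rw [mul_sub, mul_one] at h1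
  rw [← h1]; abel

lemma phi_mul_A (H : HPLHyp R C S h v η ι π) (n : ℤ) :
    Phi R C h η n * AEnd R C h η n = AEnd R C h η n - 1 := by
  have h1 : (1 - Phi R C h η n) * AEnd R C h η n = 1 :=
    Ring.mul_inverse_cancel _ (isUnit_one_sub_Phi H n)
  rw [sub_mul, one_mul] at h1
  rw [← h1]; abel

lemma B_mul_psi (H : HPLHyp R C S h v η ι π) (n : ℤ) :
    BEnd R C h η n * PsiE R C h η n = BEnd R C h η n - 1 := by
  have h1 : BEnd R C h η n * (1 - PsiE R C h η n) = 1 :=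
    Ring.inverse_mul_cancel _ (isUnit_one_sub_Psi H n)
  rw [mul_sub, mul_one] at h1
  rw [← h1]; abel

lemma psi_mul_B (H : HPLHyp R C S h v η ι π) (n : ℤ) :
    PsiE R C h η n * BEnd R C h η n = BEnd R C h η n - 1 := by
  have h1 : (1 - PsiE R C h η n) * BEnd R C h η n = 1 :=
    Ring.mul_inverse_cancel _ (isUnit_one_sub_Psi H n)
  rw [sub_mul, one_mul] at h1
  rw [← h1]; abel

lemma psi_mul_phi (H : HPLHyp R C S h v η ι π) (n : ℤ) :
    PsiE R C h η n * Phi R C h η n = 0 := by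
  rw [Module.End.mul_eq_comp]
  apply tot_ext; intro j k hn
  apply LinearMap.ext; intro c
  show PsiE R C h η n (Phi R C h η n (toTot R C j k n hn c)) = 0
  have h0 : h (j + 1) (k - 1) (h j (k - 1) (η j k c)) = 0 :=
    LinearMap.congr_fun (H.hhh j (k - 1)) (η j k c)
  rw [phi_toTot hn, psi_toTot (by omega), h0, map_zero, map_zero]

lemma B_mul_A (H : HPLHyp R C S h v η ι π) (n : ℤ) :
    BEnd R C h η n * AEnd R C h η n = AEnd R C h η n + BEnd R C h η n - 1 := by
  have e1 : (BEnd R C h η n - 1) * (AEnd R C h η n - 1) = 0 := by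
    rw [← B_mul_psi H n, ← phi_mul_A H n, mul_assoc, ← mul_assoc (PsiE R C h η n),
      psi_mul_phi H n, zero_mul, mul_zero]
  have e2 : BEnd R C h η n * AEnd R C h η n
      = (BEnd R C h η n - 1) * (AEnd R C h η n - 1)
        + AEnd R C h η n + BEnd R C h η n - 1 := by
    rw [sub_mul, mul_sub, mul_sub, mul_one, one_mul, one_mul]; abel
  rw [e2, e1, zero_add]



/-! ### Cross-degree identities -/

lemma h_comp_phi (H : HPLHyp R C S h v η ι π) {n m : ℤ} (p : n + 1 = m) :
    hTot R C h n m p ∘ₗ Phi R C h η n = 0 := by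
  rw [Phi_eq (show n - 1 + 1 = n by omega), ← LinearMap.comp_assoc,
    hTot_hTot H (by omega) p, LinearMap.zero_comp]

lemma h_comp_A (H : HPLHyp R C S h v η ι π) {n m : ℤ} (p : n + 1 = m) :
    hTot R C h n m p ∘ₗ AEnd R C h η n = hTot R C h n m p := by
  apply LinearMap.ext; intro x
  show hTot R C h n m p (AEnd R C h η n x) = hTot R C h n m p x
  have h2 : AEnd R C h η n x - Phi R C h η n (AEnd R C h η n x) = x :=
    LinearMap.congr_fun (one_sub_comp_A H n) x
  have h3 : hTot R C h n m p (Phi R C h η n (AEnd R C h η n x)) = 0 :=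
    LinearMap.congr_fun (h_comp_phi H p) (AEnd R C h η n x)
  calc hTot R C h n m p (AEnd R C h η n x)
      = hTot R C h n m p (AEnd R C h η n x - Phi R C h η n (AEnd R C h η n x))
        + hTot R C h n m p (Phi R C h η n (AEnd R C h η n x)) := by rw [map_sub]; abel
    _ = hTot R C h n m p x := by rw [h2, h3, add_zero]

lemma phi_comp_h {n m : ℤ} (p : n + 1 = m) :
    Phi R C h η m ∘ₗ hTot R C h n m p = hTot R C h n m p ∘ₗ PsiE R C h η n := by
  rw [Phi_eq p, Psi_eq p, LinearMap.comp_assoc]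

lemma h_comp_B (H : HPLHyp R C S h v η ι π) {n m : ℤ} (p : n + 1 = m) :
    hTot R C h n m p ∘ₗ BEnd R C h η n = AEnd R C h η m ∘ₗ hTot R C h n m p := by
  apply inverse_shift _ _ _ (isUnit_one_sub_Psi H n) (isUnit_one_sub_Phi H m)
  simp only [LinearMap.sub_comp, LinearMap.comp_sub, Module.End.one_eq_id, LinearMap.id_comp,
    LinearMap.comp_id, phi_comp_h p]

lemma eta_comp_phi {n m : ℤ} (p : n + 1 = m) :
    etaTot R C η m n p ∘ₗ Phi R C h η m = PsiE R C h η n ∘ₗ etaTot R C η m n p := by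
  rw [Phi_eq p, Psi_eq p, LinearMap.comp_assoc]

lemma eta_comp_A (H : HPLHyp R C S h v η ι π) {n m : ℤ} (p : n + 1 = m) :
    etaTot R C η m n p ∘ₗ AEnd R C h η m = BEnd R C h η n ∘ₗ etaTot R C η m n p := by
  apply inverse_shift _ _ _ (isUnit_one_sub_Phi H m) (isUnit_one_sub_Psi H n)
  simp only [LinearMap.sub_comp, LinearMap.comp_sub, Module.End.one_eq_id, LinearMap.id_comp,
    LinearMap.comp_id, eta_comp_phi p]

lemma phi_comp_v (H : HPLHyp R C S h v η ι π) {n m : ℤ} (p : n + 1 = m) :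
    Phi R C h η m ∘ₗ vTot R C v n m p
      = vTot R C v n m p ∘ₗ Phi R C h η n
        + hTot R C h n m p ∘ₗ (iotaTot R C S ι n ∘ₗ piTot R C S π n - LinearMap.id) := by
  apply LinearMap.ext; intro x
  show Phi R C h η m (vTot R C v n m p x)
      = vTot R C v n m p (Phi R C h η n x)
        + hTot R C h n m p (iotaTot R C S ι n (piTot R C S π n x) - x)
  have hΦm : Phi R C h η m (vTot R C v n m p x)
      = hTot R C h n m p (etaTot R C η m n p (vTot R C v n m p x)) :=
    LinearMap.congr_fun (Phi_eq p) (vTot R C v n m p x)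
  have hΦn : Phi R C h η n x
      = hTot R C h (n - 1) n (by omega) (etaTot R C η n (n - 1) (by omega) x) :=
    LinearMap.congr_fun (Phi_eq (show n - 1 + 1 = n by omega)) x
  have hIP : iotaTot R C S ι n (piTot R C S π n x)
      = x + vTot R C v (n - 1) n (by omega) (etaTot R C η n (n - 1) (by omega) x)
          + etaTot R C η m n p (vTot R C v n m p x) :=
    LinearMap.congr_fun (iotaTot_piTot H (show n - 1 + 1 = n by omega) p) x
  have hEV : etaTot R C η m n p (vTot R C v n m p x)
      = (iotaTot R C S ι n (piTot R C S π n x) - x)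
        - vTot R C v (n - 1) n (by omega) (etaTot R C η n (n - 1) (by omega) x) := by
    rw [hIP]; abel
  have hHV : hTot R C h n m p
        (vTot R C v (n - 1) n (by omega) (etaTot R C η n (n - 1) (by omega) x))
      = -(vTot R C v n m p
          (hTot R C h (n - 1) n (by omega) (etaTot R C η n (n - 1) (by omega) x))) :=
    LinearMap.congr_fun (hTot_vTot H (by omega) p (by omega) p) _
  rw [hΦm, hEV, map_sub, hHV, hΦn]
  abel

lemma psi_comp_v (H : HPLHyp R C S h v η ι π) {n m : ℤ} (p : n + 1 = m) :
    PsiE R C h η m ∘ₗ vTot R C v n m p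
      = vTot R C v n m p ∘ₗ PsiE R C h η n
        - (iotaTot R C S ι m ∘ₗ piTot R C S π m - LinearMap.id) ∘ₗ hTot R C h n m p := by
  apply LinearMap.ext; intro x
  show PsiE R C h η m (vTot R C v n m p x)
      = vTot R C v n m p (PsiE R C h η n x)
        - (iotaTot R C S ι m (piTot R C S π m (hTot R C h n m p x)) - hTot R C h n m p x)
  have hΨn : PsiE R C h η n x = etaTot R C η m n p (hTot R C h n m p x) :=
    LinearMap.congr_fun (Psi_eq p) x
  have hHV : hTot R C h m (m + 1) rfl (vTot R C v n m p x)
      = -(vTot R C v m (m + 1) rfl (hTot R C h n m p x)) :=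
    LinearMap.congr_fun (hTot_vTot H p rfl p rfl) x
  have hIP : iotaTot R C S ι m (piTot R C S π m (hTot R C h n m p x))
      = hTot R C h n m p x
        + vTot R C v n m p (etaTot R C η m n p (hTot R C h n m p x))
        + etaTot R C η (m + 1) m rfl (vTot R C v m (m + 1) rfl (hTot R C h n m p x)) :=
    LinearMap.congr_fun (iotaTot_piTot H p rfl) (hTot R C h n m p x)
  have hEV : etaTot R C η (m + 1) m rfl (vTot R C v m (m + 1) rfl (hTot R C h n m p x))
      = (iotaTot R C S ι m (piTot R C S π m (hTot R C h n m p x)) - hTot R C h n m p x)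
        - vTot R C v n m p (etaTot R C η m n p (hTot R C h n m p x)) := by
    rw [hIP]; abel
  have hstep : PsiE R C h η m (vTot R C v n m p x)
      = etaTot R C η (m + 1) m rfl (hTot R C h m (m + 1) rfl (vTot R C v n m p x)) := rfl
  rw [hstep, hHV, map_neg, hEV, hΨn]
  abel

lemma A_comp_v (H : HPLHyp R C S h v η ι π) {n m : ℤ} (p : n + 1 = m) :
    AEnd R C h η m ∘ₗ vTot R C v n m p
      = vTot R C v n m p ∘ₗ AEnd R C h η n
        + AEnd R C h η m ∘ₗ (hTot R C h n m p
            ∘ₗ ((iotaTot R C S ι n ∘ₗ piTot R C S π n - LinearMap.id) ∘ₗ AEnd R C h η n)) := by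
  apply LinearMap.ext; intro x
  show AEnd R C h η m (vTot R C v n m p x)
      = vTot R C v n m p (AEnd R C h η n x)
        + AEnd R C h η m (hTot R C h n m p
            (iotaTot R C S ι n (piTot R C S π n (AEnd R C h η n x)) - AEnd R C h η n x))
  have h1 : AEnd R C h η n x - Phi R C h η n (AEnd R C h η n x) = x :=
    LinearMap.congr_fun (one_sub_comp_A H n) x
  have h2 : Phi R C h η m (vTot R C v n m p (AEnd R C h η n x))
      = vTot R C v n m p (Phi R C h η n (AEnd R C h η n x))
        + hTot R C h n m p
            (iotaTot R C S ι n (piTot R C S π n (AEnd R C h η n x)) - AEnd R C h η n x) :=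
    LinearMap.congr_fun (phi_comp_v H p) (AEnd R C h η n x)
  have h6 : ∀ z : Tot C m, AEnd R C h η m z - AEnd R C h η m (Phi R C h η m z) = z := by
    intro z
    rw [← map_sub]
    exact LinearMap.congr_fun (A_comp_one_sub H m) z
  have h4 : vTot R C v n m p x
      = vTot R C v n m p (AEnd R C h η n x)
        - vTot R C v n m p (Phi R C h η n (AEnd R C h η n x)) := by
    rw [← map_sub, h1]
  have h5 : vTot R C v n m p (Phi R C h η n (AEnd R C h η n x))
      = Phi R C h η m (vTot R C v n m p (AEnd R C h η n x))
        - hTot R C h n m p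
            (iotaTot R C S ι n (piTot R C S π n (AEnd R C h η n x)) - AEnd R C h η n x) := by
    rw [h2]; abel
  have h6' : ∀ z : Tot C m, AEnd R C h η m (z - Phi R C h η m z) = z := fun z =>
    LinearMap.congr_fun (A_comp_one_sub H m) z
  have key : vTot R C v n m p x
      = (vTot R C v n m p (AEnd R C h η n x)
          - Phi R C h η m (vTot R C v n m p (AEnd R C h η n x)))
        + hTot R C h n m p
            (iotaTot R C S ι n (piTot R C S π n (AEnd R C h η n x)) - AEnd R C h η n x) := by
    rw [h4, h5]; abel
  rw [key, map_add, h6']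

lemma v_comp_B (H : HPLHyp R C S h v η ι π) {n m : ℤ} (p : n + 1 = m) :
    vTot R C v n m p ∘ₗ BEnd R C h η n
      = BEnd R C h η m ∘ₗ vTot R C v n m p
        + BEnd R C h η m ∘ₗ ((iotaTot R C S ι m ∘ₗ piTot R C S π m - LinearMap.id)
            ∘ₗ (AEnd R C h η m ∘ₗ hTot R C h n m p)) := by
  apply LinearMap.ext; intro x
  show vTot R C v n m p (BEnd R C h η n x)
      = BEnd R C h η m (vTot R C v n m p x)
        + BEnd R C h η m
            (iotaTot R C S ι m (piTot R C S π m (AEnd R C h η m (hTot R C h n m p x)))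
              - AEnd R C h η m (hTot R C h n m p x))
  have h1 : BEnd R C h η n x - PsiE R C h η n (BEnd R C h η n x) = x :=
    LinearMap.congr_fun (one_sub_comp_B H n) x
  have h2 : PsiE R C h η m (vTot R C v n m p (BEnd R C h η n x))
      = vTot R C v n m p (PsiE R C h η n (BEnd R C h η n x))
        - (iotaTot R C S ι m (piTot R C S π m (hTot R C h n m p (BEnd R C h η n x)))
            - hTot R C h n m p (BEnd R C h η n x)) :=
    LinearMap.congr_fun (psi_comp_v H p) (BEnd R C h η n x)
  have h3 : ∀ z : Tot C m, BEnd R C h η m z - BEnd R C h η m (PsiE R C h η m z) = z := by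
    intro z
    rw [← map_sub]
    exact LinearMap.congr_fun (B_comp_one_sub H m) z
  have hH : hTot R C h n m p (BEnd R C h η n x) = AEnd R C h η m (hTot R C h n m p x) :=
    LinearMap.congr_fun (h_comp_B H p) x
  have h4 : vTot R C v n m p x
      = vTot R C v n m p (BEnd R C h η n x)
        - vTot R C v n m p (PsiE R C h η n (BEnd R C h η n x)) := by
    rw [← map_sub, h1]
  have h5 : vTot R C v n m p (PsiE R C h η n (BEnd R C h η n x))
      = PsiE R C h η m (vTot R C v n m p (BEnd R C h η n x))
        + (iotaTot R C S ι m (piTot R C S π m (AEnd R C h η m (hTot R C h n m p x)))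
            - AEnd R C h η m (hTot R C h n m p x)) := by
    rw [h2, hH]; abel
  have h3' : ∀ z : Tot C m, BEnd R C h η m (z - PsiE R C h η m z) = z := fun z =>
    LinearMap.congr_fun (B_comp_one_sub H m) z
  have key : vTot R C v n m p x
      = (vTot R C v n m p (BEnd R C h η n x)
          - PsiE R C h η m (vTot R C v n m p (BEnd R C h η n x)))
        - (iotaTot R C S ι m (piTot R C S π m (AEnd R C h η m (hTot R C h n m p x)))
            - AEnd R C h η m (hTot R C h n m p x)) := by
    rw [h4, h5]; abel
  rw [key, map_sub, h3']
  abel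



/-! ### Normalized forms of the perturbed maps -/

lemma iotaTot'_eq (H : HPLHyp R C S h v η ι π) (n : ℤ) :
    iotaTot' R C S h η ι n = BEnd R C h η n ∘ₗ iotaTot R C S ι n := by
  apply LinearMap.ext; intro s
  show iotaTot R C S ι n s
      + etaTot R C η (n + 1) n rfl
          (AEnd R C h η (n + 1) (hTot R C h n (n + 1) rfl (iotaTot R C S ι n s)))
      = BEnd R C h η n (iotaTot R C S ι n s)
  have e1 : etaTot R C η (n + 1) n rfl
        (AEnd R C h η (n + 1) (hTot R C h n (n + 1) rfl (iotaTot R C S ι n s)))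
      = BEnd R C h η n
          (etaTot R C η (n + 1) n rfl (hTot R C h n (n + 1) rfl (iotaTot R C S ι n s))) :=
    LinearMap.congr_fun (eta_comp_A H rfl) _
  have e3 : etaTot R C η (n + 1) n rfl (hTot R C h n (n + 1) rfl (iotaTot R C S ι n s))
      = PsiE R C h η n (iotaTot R C S ι n s) := rfl
  have e2 : BEnd R C h η n (PsiE R C h η n (iotaTot R C S ι n s))
      = BEnd R C h η n (iotaTot R C S ι n s) - iotaTot R C S ι n s :=
    LinearMap.congr_fun (B_mul_psi H n) _
  rw [e1, e3, e2]; abel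

lemma piTot'_eq (H : HPLHyp R C S h v η ι π) (n : ℤ) :
    piTot' R C S h η π n = piTot R C S π n ∘ₗ AEnd R C h η n := by
  apply LinearMap.ext; intro x
  show piTot R C S π n x
      + piTot R C S π n (AEnd R C h η n
          (hTot R C h (n - 1) n (by omega) (etaTot R C η n (n - 1) (by omega) x)))
      = piTot R C S π n (AEnd R C h η n x)
  have e1 : hTot R C h (n - 1) n (by omega) (etaTot R C η n (n - 1) (by omega) x)
      = Phi R C h η n x :=
    (LinearMap.congr_fun (Phi_eq (show n - 1 + 1 = n by omega)) x).symm
  have e2 : AEnd R C h η n (Phi R C h η n x) = AEnd R C h η n x - x :=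
    LinearMap.congr_fun (A_mul_phi H n) x
  rw [e1, e2, map_sub]; abel

lemma etaTot'_eq (H : HPLHyp R C S h v η ι π) (n : ℤ) :
    etaTot' R C h η n = BEnd R C h η n ∘ₗ etaTot R C η (n + 1) n rfl := by
  apply LinearMap.ext; intro x
  show etaTot R C η (n + 1) n rfl x
      + etaTot R C η (n + 1) n rfl
          (AEnd R C h η (n + 1) (hTot R C h n (n + 1) rfl (etaTot R C η (n + 1) n rfl x)))
      = BEnd R C h η n (etaTot R C η (n + 1) n rfl x)
  have e1 : etaTot R C η (n + 1) n rfl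
        (AEnd R C h η (n + 1) (hTot R C h n (n + 1) rfl (etaTot R C η (n + 1) n rfl x)))
      = BEnd R C h η n (etaTot R C η (n + 1) n rfl
          (hTot R C h n (n + 1) rfl (etaTot R C η (n + 1) n rfl x))) :=
    LinearMap.congr_fun (eta_comp_A H rfl) _
  have e3 : etaTot R C η (n + 1) n rfl
        (hTot R C h n (n + 1) rfl (etaTot R C η (n + 1) n rfl x))
      = PsiE R C h η n (etaTot R C η (n + 1) n rfl x) := rfl
  have e2 : BEnd R C h η n (PsiE R C h η n (etaTot R C η (n + 1) n rfl x))
      = BEnd R C h η n (etaTot R C η (n + 1) n rfl x) - etaTot R C η (n + 1) n rfl x :=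
    LinearMap.congr_fun (B_mul_psi H n) _
  rw [e1, e3, e2]; abel

/-! ### The main identities -/

lemma d_squared (H : HPLHyp R C S h v η ι π) (n : ℤ) :
    dTot R C h v (n + 1) ∘ₗ dTot R C h v n = 0 := by
  apply LinearMap.ext; intro x
  show hTot R C h (n + 1) (n + 1 + 1) rfl
        (hTot R C h n (n + 1) rfl x + vTot R C v n (n + 1) rfl x)
      + vTot R C v (n + 1) (n + 1 + 1) rfl
          (hTot R C h n (n + 1) rfl x + vTot R C v n (n + 1) rfl x) = 0
  have e1 : hTot R C h (n + 1) (n + 1 + 1) rfl (hTot R C h n (n + 1) rfl x) = 0 :=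
    LinearMap.congr_fun (hTot_hTot H rfl rfl) x
  have e2 : vTot R C v (n + 1) (n + 1 + 1) rfl (vTot R C v n (n + 1) rfl x) = 0 :=
    LinearMap.congr_fun (vTot_vTot H rfl rfl) x
  have e3 : hTot R C h (n + 1) (n + 1 + 1) rfl (vTot R C v n (n + 1) rfl x)
      = -(vTot R C v (n + 1) (n + 1 + 1) rfl (hTot R C h n (n + 1) rfl x)) :=
    LinearMap.congr_fun (hTot_vTot H rfl rfl rfl rfl) x
  rw [map_add, map_add, e1, e2, e3]
  abel

lemma chain_iota (H : HPLHyp R C S h v η ι π) (n : ℤ) :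
    dTot R C h v n ∘ₗ iotaTot' R C S h η ι n
      = iotaTot' R C S h η ι (n + 1) ∘ₗ dSTot R C S h η ι π n := by
  rw [iotaTot'_eq H n, iotaTot'_eq H (n + 1)]
  apply LinearMap.ext; intro s
  show hTot R C h n (n + 1) rfl (BEnd R C h η n (iotaTot R C S ι n s))
      + vTot R C v n (n + 1) rfl (BEnd R C h η n (iotaTot R C S ι n s))
      = BEnd R C h η (n + 1) (iotaTot R C S ι (n + 1) (piTot R C S π (n + 1)
          (AEnd R C h η (n + 1) (hTot R C h n (n + 1) rfl (iotaTot R C S ι n s)))))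
  have e1 : hTot R C h n (n + 1) rfl (BEnd R C h η n (iotaTot R C S ι n s))
      = AEnd R C h η (n + 1) (hTot R C h n (n + 1) rfl (iotaTot R C S ι n s)) :=
    LinearMap.congr_fun (h_comp_B H rfl) _
  have e2 : vTot R C v n (n + 1) rfl (BEnd R C h η n (iotaTot R C S ι n s))
      = BEnd R C h η (n + 1) (vTot R C v n (n + 1) rfl (iotaTot R C S ι n s))
        + BEnd R C h η (n + 1)
            (iotaTot R C S ι (n + 1) (piTot R C S π (n + 1)
                (AEnd R C h η (n + 1) (hTot R C h n (n + 1) rfl (iotaTot R C S ι n s))))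
              - AEnd R C h η (n + 1) (hTot R C h n (n + 1) rfl (iotaTot R C S ι n s))) :=
    LinearMap.congr_fun (v_comp_B H rfl) _
  have e3 : vTot R C v n (n + 1) rfl (iotaTot R C S ι n s) = 0 :=
    LinearMap.congr_fun (vTot_iotaTot H rfl) s
  have e4 : hTot R C h (n + 1) (n + 1 + 1) rfl
        (AEnd R C h η (n + 1) (hTot R C h n (n + 1) rfl (iotaTot R C S ι n s)))
      = hTot R C h (n + 1) (n + 1 + 1) rfl (hTot R C h n (n + 1) rfl (iotaTot R C S ι n s)) :=
    LinearMap.congr_fun (h_comp_A H rfl) _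
  have e5 : hTot R C h (n + 1) (n + 1 + 1) rfl (hTot R C h n (n + 1) rfl (iotaTot R C S ι n s))
      = 0 :=
    LinearMap.congr_fun (hTot_hTot H rfl rfl) (iotaTot R C S ι n s)
  have e7 : BEnd R C h η (n + 1) (PsiE R C h η (n + 1)
        (AEnd R C h η (n + 1) (hTot R C h n (n + 1) rfl (iotaTot R C S ι n s))))
      = BEnd R C h η (n + 1)
          (AEnd R C h η (n + 1) (hTot R C h n (n + 1) rfl (iotaTot R C S ι n s)))
        - AEnd R C h η (n + 1) (hTot R C h n (n + 1) rfl (iotaTot R C S ι n s)) :=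
    LinearMap.congr_fun (B_mul_psi H (n + 1)) _
  have e6 : PsiE R C h η (n + 1)
        (AEnd R C h η (n + 1) (hTot R C h n (n + 1) rfl (iotaTot R C S ι n s)))
      = etaTot R C η (n + 1 + 1) (n + 1) rfl (hTot R C h (n + 1) (n + 1 + 1) rfl
          (AEnd R C h η (n + 1) (hTot R C h n (n + 1) rfl (iotaTot R C S ι n s)))) := rfl
  rw [e6, e4, e5, map_zero] at e7
  have hBw : BEnd R C h η (n + 1)
        (AEnd R C h η (n + 1) (hTot R C h n (n + 1) rfl (iotaTot R C S ι n s)))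
      = AEnd R C h η (n + 1) (hTot R C h n (n + 1) rfl (iotaTot R C S ι n s)) := by
    rw [map_zero] at e7
    exact sub_eq_zero.mp e7.symm
  rw [e1, e2, e3, map_zero, map_sub, hBw]
  abel

lemma L_iota' (H : HPLHyp R C S h v η ι π) (n : ℤ) :
    (piTot R C S π n ∘ₗ (1 - PsiE R C h η n)) ∘ₗ iotaTot' R C S h η ι n = LinearMap.id := by
  rw [iotaTot'_eq H n]
  apply LinearMap.ext; intro s
  show piTot R C S π n ((1 - PsiE R C h η n) (BEnd R C h η n (iotaTot R C S ι n s))) = s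
  have e1 : (1 - PsiE R C h η n) (BEnd R C h η n (iotaTot R C S ι n s))
      = iotaTot R C S ι n s :=
    LinearMap.congr_fun (one_sub_comp_B H n) _
  rw [e1]
  exact LinearMap.congr_fun (piTot_iotaTot H n) s

lemma dS_squared (H : HPLHyp R C S h v η ι π) (n : ℤ) :
    dSTot R C S h η ι π (n + 1) ∘ₗ dSTot R C S h η ι π n = 0 := by
  apply LinearMap.ext; intro x
  show dSTot R C S h η ι π (n + 1) (dSTot R C S h η ι π n x) = 0
  have h1 : iotaTot' R C S h η ι (n + 1 + 1)
      (dSTot R C S h η ι π (n + 1) (dSTot R C S h η ι π n x)) = 0 := by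
    have c1 : iotaTot' R C S h η ι (n + 1 + 1)
          (dSTot R C S h η ι π (n + 1) (dSTot R C S h η ι π n x))
        = dTot R C h v (n + 1) (iotaTot' R C S h η ι (n + 1) (dSTot R C S h η ι π n x)) :=
      (LinearMap.congr_fun (chain_iota H (n + 1)) (dSTot R C S h η ι π n x)).symm
    have c2 : iotaTot' R C S h η ι (n + 1) (dSTot R C S h η ι π n x)
        = dTot R C h v n (iotaTot' R C S h η ι n x) :=
      (LinearMap.congr_fun (chain_iota H n) x).symm
    rw [c1, c2]
    exact LinearMap.congr_fun (d_squared H n) (iotaTot' R C S h η ι n x)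
  have h2 : piTot R C S π (n + 1 + 1) ((1 - PsiE R C h η (n + 1 + 1))
        (iotaTot' R C S h η ι (n + 1 + 1)
          (dSTot R C S h η ι π (n + 1) (dSTot R C S h η ι π n x))))
      = dSTot R C S h η ι π (n + 1) (dSTot R C S h η ι π n x) :=
    LinearMap.congr_fun (L_iota' H (n + 1 + 1)) _
  rw [h1, map_zero, map_zero] at h2
  exact h2.symm

lemma chain_pi (H : HPLHyp R C S h v η ι π) (n : ℤ) :
    dSTot R C S h η ι π n ∘ₗ piTot' R C S h η π n
      = piTot' R C S h η π (n + 1) ∘ₗ dTot R C h v n := by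
  rw [piTot'_eq H n, piTot'_eq H (n + 1)]
  apply LinearMap.ext; intro x
  show piTot R C S π (n + 1) (AEnd R C h η (n + 1) (hTot R C h n (n + 1) rfl
        (iotaTot R C S ι n (piTot R C S π n (AEnd R C h η n x)))))
      = piTot R C S π (n + 1) (AEnd R C h η (n + 1)
          (hTot R C h n (n + 1) rfl x + vTot R C v n (n + 1) rfl x))
  have e1 : AEnd R C h η (n + 1) (vTot R C v n (n + 1) rfl x)
      = vTot R C v n (n + 1) rfl (AEnd R C h η n x)
        + AEnd R C h η (n + 1) (hTot R C h n (n + 1) rfl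
            (iotaTot R C S ι n (piTot R C S π n (AEnd R C h η n x)) - AEnd R C h η n x)) :=
    LinearMap.congr_fun (A_comp_v H rfl) x
  have e2 : piTot R C S π (n + 1) (vTot R C v n (n + 1) rfl (AEnd R C h η n x)) = 0 :=
    LinearMap.congr_fun (piTot_vTot H rfl) _
  have e4 : hTot R C h n (n + 1) rfl (AEnd R C h η n x) = hTot R C h n (n + 1) rfl x :=
    LinearMap.congr_fun (h_comp_A H rfl) x
  rw [map_add, map_add, e1, map_sub, map_sub, e4, map_add, e2, map_sub]
  abel

lemma homotopy_eq (H : HPLHyp R C S h v η ι π) (n : ℤ) :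
    iotaTot' R C S h η ι (n + 1) ∘ₗ piTot' R C S h η π (n + 1)
      = LinearMap.id + dTot R C h v n ∘ₗ etaTot' R C h η n
        + etaTot' R C h η (n + 1) ∘ₗ dTot R C h v (n + 1) := by
  rw [iotaTot'_eq H (n + 1), piTot'_eq H (n + 1), etaTot'_eq H n, etaTot'_eq H (n + 1)]
  apply LinearMap.ext; intro x
  show BEnd R C h η (n + 1) (iotaTot R C S ι (n + 1) (piTot R C S π (n + 1)
        (AEnd R C h η (n + 1) x)))
      = x + (hTot R C h n (n + 1) rfl (BEnd R C h η n (etaTot R C η (n + 1) n rfl x))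
          + vTot R C v n (n + 1) rfl (BEnd R C h η n (etaTot R C η (n + 1) n rfl x)))
        + BEnd R C h η (n + 1) (etaTot R C η (n + 1 + 1) (n + 1) rfl
            (hTot R C h (n + 1) (n + 1 + 1) rfl x + vTot R C v (n + 1) (n + 1 + 1) rfl x))
  have a1 : ∀ w : Tot C (n + 1), iotaTot R C S ι (n + 1) (piTot R C S π (n + 1) w)
      = w + vTot R C v n (n + 1) rfl (etaTot R C η (n + 1) n rfl w)
        + etaTot R C η (n + 1 + 1) (n + 1) rfl (vTot R C v (n + 1) (n + 1 + 1) rfl w) :=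
    fun w => LinearMap.congr_fun (iotaTot_piTot H rfl rfl) w
  have a2 : hTot R C h n (n + 1) rfl (BEnd R C h η n (etaTot R C η (n + 1) n rfl x))
      = AEnd R C h η (n + 1)
          (hTot R C h n (n + 1) rfl (etaTot R C η (n + 1) n rfl x)) :=
    LinearMap.congr_fun (h_comp_B H rfl) _
  have a5 : vTot R C v n (n + 1) rfl (BEnd R C h η n (etaTot R C η (n + 1) n rfl x))
      = BEnd R C h η (n + 1)
          (vTot R C v n (n + 1) rfl (etaTot R C η (n + 1) n rfl x))
        + BEnd R C h η (n + 1)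
            (iotaTot R C S ι (n + 1) (piTot R C S π (n + 1)
                (AEnd R C h η (n + 1)
                  (hTot R C h n (n + 1) rfl (etaTot R C η (n + 1) n rfl x))))
              - AEnd R C h η (n + 1)
                  (hTot R C h n (n + 1) rfl (etaTot R C η (n + 1) n rfl x))) :=
    LinearMap.congr_fun (v_comp_B H rfl) _
  have a3 : hTot R C h n (n + 1) rfl (etaTot R C η (n + 1) n rfl x)
      = Phi R C h η (n + 1) x :=
    (LinearMap.congr_fun (Phi_eq (rfl : n + 1 = n + 1)) x).symm
  have a4 : AEnd R C h η (n + 1) (Phi R C h η (n + 1) x) = AEnd R C h η (n + 1) x - x :=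
    LinearMap.congr_fun (A_mul_phi H (n + 1)) x
  have a6 : etaTot R C η (n + 1 + 1) (n + 1) rfl (hTot R C h (n + 1) (n + 1 + 1) rfl x)
      = PsiE R C h η (n + 1) x := rfl
  have a7 : BEnd R C h η (n + 1) (PsiE R C h η (n + 1) x)
      = BEnd R C h η (n + 1) x - x :=
    LinearMap.congr_fun (B_mul_psi H (n + 1)) x
  have a8 : BEnd R C h η (n + 1) (AEnd R C h η (n + 1) x)
      = AEnd R C h η (n + 1) x + BEnd R C h η (n + 1) x - x :=
    LinearMap.congr_fun (B_mul_A H (n + 1)) x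
  rw [a5, a2, a3, a4]
  simp only [map_sub]
  rw [a1 (AEnd R C h η (n + 1) x), a1 x]
  simp only [map_add]
  rw [a6, a7, a8]
  abel



/-! ### The operator `K = π'∘ι' - 1` and its inverse -/

variable (R C S h η ι π) in
/-- `K = π'∘ι' - 1` on `Tot(S)`. -/
noncomputable def KEnd (n : ℤ) : Module.End R (Tot S n) :=
  piTot R C S π n ∘ₗ ((AEnd R C h η n * BEnd R C h η n - 1) ∘ₗ iotaTot R C S ι n)

lemma pi'_iota' (H : HPLHyp R C S h v η ι π) (n : ℤ) :
    piTot' R C S h η π n ∘ₗ iotaTot' R C S h η ι n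
      = LinearMap.id + KEnd R C S h η ι π n := by
  rw [piTot'_eq H n, iotaTot'_eq H n]
  apply LinearMap.ext; intro s
  show piTot R C S π n (AEnd R C h η n (BEnd R C h η n (iotaTot R C S ι n s)))
      = s + piTot R C S π n
          (AEnd R C h η n (BEnd R C h η n (iotaTot R C S ι n s)) - iotaTot R C S ι n s)
  have e1 : piTot R C S π n (iotaTot R C S ι n s) = s :=
    LinearMap.congr_fun (piTot_iotaTot H n) s
  rw [map_sub, e1]
  abel

lemma iota_filt (n : ℤ) : FiltMap R S C n 0 (iotaTot R C S ι n) := by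
  apply filt_of_component
  intro j k hn s
  rw [iotaTot_toTot hn]
  exact toTot_mem_Fsub R C hn (by omega) _

lemma pi_filt (n : ℤ) : FiltMap R C S n 0 (piTot R C S π n) := by
  apply filt_of_component
  intro j k hn c
  rw [piTot_toTot hn]
  exact toTot_mem_Fsub R S hn (by omega) _

lemma K_filt (H : HPLHyp R C S h v η ι π) (n : ℤ) :
    FiltMap R S S n 1 (KEnd R C S h η ι π n) := by
  have e : AEnd R C h η n * BEnd R C h η n - 1
      = AEnd R C h η n * (PsiE R C h η n * BEnd R C h η n)
        + Phi R C h η n * AEnd R C h η n := by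
    rw [psi_mul_B H n, phi_mul_A H n, mul_sub, mul_one]
    abel
  unfold KEnd
  rw [e]
  have hX : FiltMap R C C n 1
      (AEnd R C h η n * (PsiE R C h η n * BEnd R C h η n)
        + Phi R C h η n * AEnd R C h η n) := by
    apply filt_add
    · exact filt_mono R C C (by omega)
        (filt_comp R C C C (filt_comp R C C C (B_filt H n) (psi_filt n)) (A_filt H n))
    · exact filt_mono R C C (by omega)
        (filt_comp R C C C (A_filt H n) (phi_filt n))
  exact filt_mono R S S (by omega)
    (filt_comp R S C S (filt_comp R S C C (iota_filt n) hX) (pi_filt n))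

lemma isUnit_one_add_K (H : HPLHyp R C S h v η ι π) (n : ℤ) :
    IsUnit (1 + KEnd R C S h η ι π n) := by
  have hnil : IsNilpotent (KEnd R C S h η ι π n) :=
    ⟨n.toNat + 1, filt_nilpotent R S H.hSfq (K_filt H n)⟩
  have := hnil.neg.isUnit_one_sub
  rwa [sub_neg_eq_add] at this

variable (R C S h η ι π) in
/-- `M = (1 + K)⁻¹` on `Tot(S)`. -/
noncomputable def MEnd (n : ℤ) : Module.End R (Tot S n) :=
  Ring.inverse (1 + KEnd R C S h η ι π n)

lemma chainK (H : HPLHyp R C S h v η ι π) (n : ℤ) :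
    dSTot R C S h η ι π n ∘ₗ (1 + KEnd R C S h η ι π n)
      = (1 + KEnd R C S h η ι π (n + 1)) ∘ₗ dSTot R C S h η ι π n := by
  rw [Module.End.one_eq_id, Module.End.one_eq_id, ← pi'_iota' H n, ← pi'_iota' H (n + 1)]
  apply LinearMap.ext; intro x
  show dSTot R C S h η ι π n (piTot' R C S h η π n (iotaTot' R C S h η ι n x))
      = piTot' R C S h η π (n + 1) (iotaTot' R C S h η ι (n + 1)
          (dSTot R C S h η ι π n x))
  have c1 : dSTot R C S h η ι π n (piTot' R C S h η π n (iotaTot' R C S h η ι n x))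
      = piTot' R C S h η π (n + 1) (dTot R C h v n (iotaTot' R C S h η ι n x)) :=
    LinearMap.congr_fun (chain_pi H n) _
  have c2 : dTot R C h v n (iotaTot' R C S h η ι n x)
      = iotaTot' R C S h η ι (n + 1) (dSTot R C S h η ι π n x) :=
    LinearMap.congr_fun (chain_iota H n) x
  rw [c1, c2]

lemma chainM (H : HPLHyp R C S h v η ι π) (n : ℤ) :
    MEnd R C S h η ι π (n + 1) ∘ₗ dSTot R C S h η ι π n
      = dSTot R C S h η ι π n ∘ₗ MEnd R C S h η ι π n := by
  apply LinearMap.ext; intro x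
  show MEnd R C S h η ι π (n + 1) (dSTot R C S h η ι π n x)
      = dSTot R C S h η ι π n (MEnd R C S h η ι π n x)
  have e1 : (1 + KEnd R C S h η ι π n) (MEnd R C S h η ι π n x) = x :=
    LinearMap.congr_fun (self_comp_inverse _ (isUnit_one_add_K H n)) x
  have e2 : ∀ z, MEnd R C S h η ι π (n + 1) ((1 + KEnd R C S h η ι π (n + 1)) z) = z :=
    fun z => LinearMap.congr_fun (inverse_comp_self _ (isUnit_one_add_K H (n + 1))) z
  have e3 : dSTot R C S h η ι π n ((1 + KEnd R C S h η ι π n) (MEnd R C S h η ι π n x))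
      = (1 + KEnd R C S h η ι π (n + 1)) (dSTot R C S h η ι π n (MEnd R C S h η ι π n x)) :=
    LinearMap.congr_fun (chainK H n) _
  calc MEnd R C S h η ι π (n + 1) (dSTot R C S h η ι π n x)
      = MEnd R C S h η ι π (n + 1)
          (dSTot R C S h η ι π n ((1 + KEnd R C S h η ι π n) (MEnd R C S h η ι π n x))) := by
        rw [e1]
    _ = MEnd R C S h η ι π (n + 1) ((1 + KEnd R C S h η ι π (n + 1))
          (dSTot R C S h η ι π n (MEnd R C S h η ι π n x))) := by rw [e3]
    _ = dSTot R C S h η ι π n (MEnd R C S h η ι π n x) := e2 _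


theorem hpl_for_double_complexes
    -- first-quadrant conditions
    (hCfq : ∀ j k : ℤ, j < 0 ∨ k < 0 → Subsingleton (C j k))
    (hSfq : ∀ j k : ℤ, j < 0 ∨ k < 0 → Subsingleton (S j k))
    -- double complex axioms
    (hhh : ∀ j k : ℤ, h (j + 1) k ∘ₗ h j k = 0)
    (hvv : ∀ j k : ℤ, v j (k + 1) ∘ₗ v j k = 0)
    (hhv : ∀ j k : ℤ, h j (k + 1) ∘ₗ v j k + v (j + 1) k ∘ₗ h j k = 0)
    -- column-wise contraction axioms
    (hvι : ∀ j k : ℤ, v j k ∘ₗ ι j k = 0)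
    (hπv : ∀ j k : ℤ, π j (k + 1) ∘ₗ v j k = 0)
    (hcontr : ∀ j k : ℤ, ι j k ∘ₗ π j k =
      (LinearMap.id : C j k →ₗ[R] C j k)
        + lcast R C rfl (by omega : k - 1 + 1 = k) ∘ₗ v j (k - 1) ∘ₗ η j k
        + lcast R C rfl (by omega : k + 1 - 1 = k) ∘ₗ η j (k + 1) ∘ₗ v j k)
    (hcolι : ∀ j : ℤ, IsQuasiIsoFam R
      (fun k => (0 : S j k →ₗ[R] S j (k + 1))) (v j) (ι j))
    (hcolπ : ∀ j : ℤ, IsQuasiIsoFam R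
      (v j) (fun k => (0 : S j k →ₗ[R] S j (k + 1))) (π j)) :
    -- local nilpotency and invertibility of `id − h∘η`
    (∀ n : ℤ, ∃ N : ℕ, Phi R C h η n ^ N = 0) ∧
    (∀ n : ℤ, IsUnit ((1 : Module.End R (Tot C n)) - Phi R C h η n)) ∧
    -- (i) the transferred differential is square-zero
    (∀ n : ℤ, dSTot R C S h η ι π (n + 1) ∘ₗ dSTot R C S h η ι π n = 0) ∧
    -- (ii) `ι'` and `π'` are chain maps
    (∀ n : ℤ, dTot R C h v n ∘ₗ iotaTot' R C S h η ι n =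
      iotaTot' R C S h η ι (n + 1) ∘ₗ dSTot R C S h η ι π n) ∧
    (∀ n : ℤ, dSTot R C S h η ι π n ∘ₗ piTot' R C S h η π n =
      piTot' R C S h η π (n + 1) ∘ₗ dTot R C h v n) ∧
    -- (iii) they are quasi-isomorphisms
    IsQuasiIsoFam R (dSTot R C S h η ι π) (dTot R C h v) (iotaTot' R C S h η ι) ∧
    IsQuasiIsoFam R (dTot R C h v) (dSTot R C S h η ι π) (piTot' R C S h η π) ∧
    -- (iv) `η'` is a homotopy from `ι'∘π'` to the identity
    (∀ n : ℤ, iotaTot' R C S h η ι (n + 1) ∘ₗ piTot' R C S h η π (n + 1) =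
      LinearMap.id
        + dTot R C h v n ∘ₗ etaTot' R C h η n
        + etaTot' R C h η (n + 1) ∘ₗ dTot R C h v (n + 1)) := by
  have H : HPLHyp R C S h v η ι π :=
    ⟨hCfq, hSfq, hhh, hvv, hhv, hvι, hπv, hcontr, hcolι, hcolπ⟩
  refine ⟨fun n => ⟨n.toNat + 1, filt_nilpotent R C H.hCfq (phi_filt n)⟩,
    fun n => isUnit_one_sub_Phi H n,
    fun n => dS_squared H n,
    fun n => chain_iota H n,
    fun n => chain_pi H n,
    ⟨?_, ?_⟩, ⟨?_, ?_⟩, fun n => homotopy_eq H n⟩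
  · -- ι' is surjective on cohomology
    intro n y hy
    refine ⟨piTot' R C S h η π (n + 1) y, ?_, ⟨etaTot' R C h η n y, ?_⟩⟩
    · have c' : dSTot R C S h η ι π (n + 1) (piTot' R C S h η π (n + 1) y)
          = piTot' R C S h η π (n + 1 + 1) (dTot R C h v (n + 1) y) :=
        LinearMap.congr_fun (chain_pi H (n + 1)) y
      rw [hy, map_zero] at c'
      exact c'
    · have h5 : iotaTot' R C S h η ι (n + 1) (piTot' R C S h η π (n + 1) y)
          = y + dTot R C h v n (etaTot' R C h η n y)
            + etaTot' R C h η (n + 1) (dTot R C h v (n + 1) y) :=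
        LinearMap.congr_fun (homotopy_eq H n) y
      rw [hy, map_zero, add_zero] at h5
      exact h5
  · -- ι' is injective on cohomology
    rintro n x hx ⟨z, hz⟩
    refine ⟨MEnd R C S h η ι π n (piTot' R C S h η π n z), ?_⟩
    have hPI : (1 + KEnd R C S h η ι π (n + 1)) x
        = piTot' R C S h η π (n + 1) (iotaTot' R C S h η ι (n + 1) x) :=
      (LinearMap.congr_fun (pi'_iota' H (n + 1)) x).symm
    have h1 : (1 + KEnd R C S h η ι π (n + 1)) x
        = dSTot R C S h η ι π n (piTot' R C S h η π n z) := by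
      rw [hPI, hz]
      exact (LinearMap.congr_fun (chain_pi H n) z).symm
    have e2 : MEnd R C S h η ι π (n + 1) ((1 + KEnd R C S h η ι π (n + 1)) x) = x :=
      LinearMap.congr_fun (inverse_comp_self _ (isUnit_one_add_K H (n + 1))) x
    have e3 : MEnd R C S h η ι π (n + 1) (dSTot R C S h η ι π n (piTot' R C S h η π n z))
        = dSTot R C S h η ι π n (MEnd R C S h η ι π n (piTot' R C S h η π n z)) :=
      LinearMap.congr_fun (chainM H n) _
    rw [← e2, h1, e3]
  · -- π' is surjective on cohomology
    intro n y hy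
    refine ⟨iotaTot' R C S h η ι (n + 1) (MEnd R C S h η ι π (n + 1) y), ?_, ⟨0, ?_⟩⟩
    · have c1 : dTot R C h v (n + 1) (iotaTot' R C S h η ι (n + 1)
            (MEnd R C S h η ι π (n + 1) y))
          = iotaTot' R C S h η ι (n + 1 + 1) (dSTot R C S h η ι π (n + 1)
              (MEnd R C S h η ι π (n + 1) y)) :=
        LinearMap.congr_fun (chain_iota H (n + 1)) _
      have c2 : dSTot R C S h η ι π (n + 1) (MEnd R C S h η ι π (n + 1) y)
          = MEnd R C S h η ι π (n + 1 + 1) (dSTot R C S h η ι π (n + 1) y) :=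
        (LinearMap.congr_fun (chainM H (n + 1)) y).symm
      rw [c1, c2, hy, map_zero, map_zero]
    · have hPI : piTot' R C S h η π (n + 1) (iotaTot' R C S h η ι (n + 1)
            (MEnd R C S h η ι π (n + 1) y))
          = (1 + KEnd R C S h η ι π (n + 1)) (MEnd R C S h η ι π (n + 1) y) :=
        LinearMap.congr_fun (pi'_iota' H (n + 1)) _
      have e1 : (1 + KEnd R C S h η ι π (n + 1)) (MEnd R C S h η ι π (n + 1) y) = y :=
        LinearMap.congr_fun (self_comp_inverse _ (isUnit_one_add_K H (n + 1))) y
      rw [hPI, e1, map_zero, add_zero]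
  · -- π' is injective on cohomology
    rintro n x hx ⟨z, hz⟩
    refine ⟨iotaTot' R C S h η ι n z - etaTot' R C h η n x, ?_⟩
    have h5 : iotaTot' R C S h η ι (n + 1) (piTot' R C S h η π (n + 1) x)
        = x + dTot R C h v n (etaTot' R C h η n x)
          + etaTot' R C h η (n + 1) (dTot R C h v (n + 1) x) :=
      LinearMap.congr_fun (homotopy_eq H n) x
    rw [hx, map_zero, add_zero] at h5
    have h6 : iotaTot' R C S h η ι (n + 1) (dSTot R C S h η ι π n z)
        = dTot R C h v n (iotaTot' R C S h η ι n z) :=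
      (LinearMap.congr_fun (chain_iota H n) z).symm
    rw [hz, h6] at h5
    rw [map_sub, h5]
    abel

end
end

section
/- One coupling constant up to isomorphism (§5.2): With the two-row data (V_i, W_j, U, a, b, s, t, u, w) fixed as in the context, for all nonzero real numbers m, e, λ, κ there is an isomorphism of cochain complexes of abelian groups T⟨m, e, λ, κ⟩ ≅ T⟨1, 1, 1, (eκ)/(mλ)⟩, given degreewise by multiplication by suitable nonzero real scalars on the vector-space summands and by the identity on the two copies of ℤ. -/
/-!
Statement 13: One coupling constant up to isomorphism (§5.2 of the paper).

Fix `p q : ℕ`, real vector spaces `V₀, …, V_p`, `W₀, …, W_q`, `U` (encoded as ℤ-indexed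
families `V W : ℤ → Type` vanishing outside `[0, p]` resp. `[0, q]`), linear maps
`a_i : V_i → V_{i+1}`, `b_j : W_j → W_{j+1}`, `s : V_p → U`, `t : W_q → U`, and additive
maps `u : ℤ → V₀`, `w : ℤ → W₀`, with all composites of consecutive maps vanishing.
For nonzero reals `m, e, λ, κ`, `T⟨m,e,λ,κ⟩` is the cochain complex of abelian groups
whose degree-`r` term is `ℤ` (at `-p-1`) ⊕ `ℤ` (at `-q-1`) ⊕ `V_{p+r}` ⊕ `W_{q+r}` ⊕ `U`
(at `1`), with differentials `m·u`, `e·w`, the `a`'s and `b`'s, and `λ·s`, `-κ·t` into the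
degree-`1` term `U`.

Then for all nonzero `m, e, λ, κ` there is an isomorphism of cochain complexes of abelian
groups `T⟨m,e,λ,κ⟩ ≅ T⟨1,1,1,(eκ)/(mλ)⟩` given degreewise by multiplication by suitable
nonzero real scalars on the vector-space summands and by the identity on the two copies
of `ℤ`.
-/

universe v

noncomputable section

/-- Transport along an equality of indices in a ℤ-indexed family of abelian groups. -/
def famCast {V : ℤ → Type v} [∀ i, AddCommGroup (V i)] {i j : ℤ} (h : i = j) :
    V i →+ V j := by
  subst h; exact AddMonoidHom.id _

/-- A copy of `ℤ` placed in the single degree `d`: as a subgroup of `ℤ`, everything in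
degree `r = d` and zero otherwise. -/
def zAt (d r : ℤ) : AddSubgroup ℤ := if r = d then ⊤ else ⊥

/-- A real vector space `M` placed in the single degree `d`: as a submodule of `M`,
everything in degree `r = d` and zero otherwise. -/
def modAt (M : Type v) [AddCommGroup M] [Module ℝ M] (d r : ℤ) : Submodule ℝ M :=
  if r = d then ⊤ else ⊥

/-- Include `M` into its degree-`d` copy, in degree `r = d`. -/
def intoModAt {M : Type v} [AddCommGroup M] [Module ℝ M] {d r : ℤ} (h : r = d) :
    M →+ ↥(modAt M d r) where
  toFun x := ⟨x, by simp [modAt, h]⟩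
  map_zero' := rfl
  map_add' _ _ := rfl

section TwoRow

variable (p q : ℕ)
variable (V W : ℤ → Type v)
variable [∀ i, AddCommGroup (V i)] [∀ i, Module ℝ (V i)]
variable [∀ i, AddCommGroup (W i)] [∀ i, Module ℝ (W i)]
variable (U : Type v) [AddCommGroup U] [Module ℝ U]
variable (a : ∀ i : ℤ, V i →ₗ[ℝ] V (i + 1))
variable (b : ∀ i : ℤ, W i →ₗ[ℝ] W (i + 1))
variable (s : V (p : ℤ) →ₗ[ℝ] U) (t : W (q : ℤ) →ₗ[ℝ] U)
variable (u : ℤ →+ V 0) (w : ℤ →+ W 0)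

/-- Degree-`r` term of the two-row complex `T⟨m,e,λ,κ⟩`: the direct sum of a copy of `ℤ`
in degree `-p-1`, a copy of `ℤ` in degree `-q-1`, `V_{p+r}`, `W_{q+r}`, and `U` in
degree `1`.  (The terms do not depend on the coupling constants.) -/
abbrev TTerm (r : ℤ) :=
  ↥(zAt (-(p : ℤ) - 1) r) × ↥(zAt (-(q : ℤ) - 1) r) ×
    V ((p : ℤ) + r) × W ((q : ℤ) + r) × ↥(modAt U 1 r)

/-- Projection onto the first `ℤ`-summand. -/
def prZ1 (r : ℤ) : TTerm p q V W U r →+ ↥(zAt (-(p : ℤ) - 1) r) :=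
  AddMonoidHom.mk' (fun x => x.1) (fun _ _ => rfl)

/-- Projection onto the second `ℤ`-summand. -/
def prZ2 (r : ℤ) : TTerm p q V W U r →+ ↥(zAt (-(q : ℤ) - 1) r) :=
  AddMonoidHom.mk' (fun x => x.2.1) (fun _ _ => rfl)

/-- Projection onto the `V`-summand. -/
def prV (r : ℤ) : TTerm p q V W U r →+ V ((p : ℤ) + r) :=
  AddMonoidHom.mk' (fun x => x.2.2.1) (fun _ _ => rfl)

/-- Projection onto the `W`-summand. -/
def prW (r : ℤ) : TTerm p q V W U r →+ W ((q : ℤ) + r) :=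
  AddMonoidHom.mk' (fun x => x.2.2.2.1) (fun _ _ => rfl)

/-- The component of the differential landing in the `V`-row: the row map `a` together
with (in degree `-p-1`) the map `m·u` out of the first copy of `ℤ`. -/
def dTV (m : ℝ) (r : ℤ) : TTerm p q V W U r →+ V ((p : ℤ) + (r + 1)) :=
  (famCast (by ring : (p : ℤ) + r + 1 = (p : ℤ) + (r + 1))).comp
      ((a ((p : ℤ) + r)).toAddMonoidHom.comp (prV p q V W U r))
    + (if h : r = -(p : ℤ) - 1 then
        (famCast (by omega : (0 : ℤ) = (p : ℤ) + (r + 1))).comp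
          (((LinearMap.lsmul ℝ (V 0) m).toAddMonoidHom.comp u).comp
            ((zAt (-(p : ℤ) - 1) r).subtype.comp (prZ1 p q V W U r)))
      else 0)

/-- The component of the differential landing in the `W`-row: the row map `b` together
with (in degree `-q-1`) the map `e·w` out of the second copy of `ℤ`. -/
def dTW (e : ℝ) (r : ℤ) : TTerm p q V W U r →+ W ((q : ℤ) + (r + 1)) :=
  (famCast (by ring : (q : ℤ) + r + 1 = (q : ℤ) + (r + 1))).comp
      ((b ((q : ℤ) + r)).toAddMonoidHom.comp (prW p q V W U r))
    + (if h : r = -(q : ℤ) - 1 then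
        (famCast (by omega : (0 : ℤ) = (q : ℤ) + (r + 1))).comp
          (((LinearMap.lsmul ℝ (W 0) e).toAddMonoidHom.comp w).comp
            ((zAt (-(q : ℤ) - 1) r).subtype.comp (prZ2 p q V W U r)))
      else 0)

/-- The component of the differential landing in the degree-`1` term `U`:
`λ·s` on the `V`-row and `-κ·t` on the `W`-row. -/
def dTU (lam kap : ℝ) (r : ℤ) : TTerm p q V W U r →+ ↥(modAt U 1 (r + 1)) :=
  if h : r = 0 then
    (intoModAt (by omega : r + 1 = 1)).comp
      (((lam • s).toAddMonoidHom.comp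
          ((famCast (by omega : (p : ℤ) + r = (p : ℤ))).comp (prV p q V W U r)))
        + (((-kap) • t).toAddMonoidHom.comp
            ((famCast (by omega : (q : ℤ) + r = (q : ℤ))).comp (prW p q V W U r))))
  else 0

/-- The degree-`r` differential of the two-row complex `T⟨m,e,λ,κ⟩`. -/
def dT (m e lam kap : ℝ) (r : ℤ) : TTerm p q V W U r →+ TTerm p q V W U (r + 1) :=
  (0 : TTerm p q V W U r →+ ↥(zAt (-(p : ℤ) - 1) (r + 1))).prod <|
    (0 : TTerm p q V W U r →+ ↥(zAt (-(q : ℤ) - 1) (r + 1))).prod <|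
      (dTV p q V W U a u m r).prod <|
        (dTW p q V W U b w e r).prod (dTU p q V W U s t lam kap r)

end TwoRow

lemma famCast_smul {V : ℤ → Type v} [∀ i, AddCommGroup (V i)] [∀ i, Module ℝ (V i)]
    {i j : ℤ} (h : i = j) (c : ℝ) (x : V i) :
    famCast (V := V) h (c • x) = c • famCast (V := V) h x := by
  subst h; rfl

lemma intoModAt_smul {M : Type v} [AddCommGroup M] [Module ℝ M] {d r : ℤ} (h : r = d)
    (c : ℝ) (x : M) : intoModAt (M := M) h (c • x) = c • intoModAt (M := M) h x := rfl

theorem one_coupling_constant_up_to_isomorphism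
    (p q : ℕ) (V W : ℤ → Type v)
    [∀ i, AddCommGroup (V i)] [∀ i, Module ℝ (V i)]
    [∀ i, AddCommGroup (W i)] [∀ i, Module ℝ (W i)]
    (hV : ∀ i : ℤ, i < 0 ∨ (p : ℤ) < i → Subsingleton (V i))
    (hW : ∀ i : ℤ, i < 0 ∨ (q : ℤ) < i → Subsingleton (W i))
    (U : Type v) [AddCommGroup U] [Module ℝ U]
    (a : ∀ i : ℤ, V i →ₗ[ℝ] V (i + 1)) (b : ∀ i : ℤ, W i →ₗ[ℝ] W (i + 1))
    (s : V (p : ℤ) →ₗ[ℝ] U) (t : W (q : ℤ) →ₗ[ℝ] U)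
    (u : ℤ →+ V 0) (w : ℤ →+ W 0)
    -- all composites of two consecutive maps vanish
    (haa : ∀ i : ℤ, a (i + 1) ∘ₗ a i = 0)
    (hbb : ∀ i : ℤ, b (i + 1) ∘ₗ b i = 0)
    (hau : ∀ z : ℤ, a 0 (u z) = 0)
    (hbw : ∀ z : ℤ, b 0 (w z) = 0)
    (hsa : ∀ x : V ((p : ℤ) - 1),
      s (famCast (V := V) (by ring : (p : ℤ) - 1 + 1 = (p : ℤ)) (a ((p : ℤ) - 1) x)) = 0)
    (htb : ∀ x : W ((q : ℤ) - 1),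
      t (famCast (V := W) (by ring : (q : ℤ) - 1 + 1 = (q : ℤ)) (b ((q : ℤ) - 1) x)) = 0)
    (hsu : ∀ _ : p = 0, ∀ z : ℤ,
      s (famCast (V := V) (by omega : (0 : ℤ) = (p : ℤ)) (u z)) = 0)
    (htw : ∀ _ : q = 0, ∀ z : ℤ,
      t (famCast (V := W) (by omega : (0 : ℤ) = (q : ℤ)) (w z)) = 0)
    (m e lam kap : ℝ) (hm : m ≠ 0) (he : e ≠ 0) (hlam : lam ≠ 0) (hkap : kap ≠ 0) :
    ∃ φ : ∀ r : ℤ, TTerm p q V W U r ≃+ TTerm p q V W U r,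
      -- φ is a chain map  T⟨m,e,λ,κ⟩ → T⟨1,1,1,(e·κ)/(m·λ)⟩  …
      (∀ (r : ℤ) (x : TTerm p q V W U r),
        dT p q V W U a b s t u w 1 1 1 (e * kap / (m * lam)) r (φ r x) =
          φ (r + 1) (dT p q V W U a b s t u w m e lam kap r x)) ∧
      -- … given degreewise by nonzero real scalars on the vector-space summands and by
      -- the identity on the two copies of ℤ.
      ∃ (cV cW : ℤ → ℝ) (cU : ℝ),
        (∀ i, cV i ≠ 0) ∧ (∀ i, cW i ≠ 0) ∧ cU ≠ 0 ∧
        ∀ (r : ℤ) (x : TTerm p q V W U r),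
          φ r x = (x.1, x.2.1, cV ((p : ℤ) + r) • x.2.2.1,
            cW ((q : ℤ) + r) • x.2.2.2.1, cU • x.2.2.2.2) := by
  classical
  have hml : m * lam ≠ 0 := mul_ne_zero hm hlam
  set φ : ∀ r : ℤ, TTerm p q V W U r ≃+ TTerm p q V W U r := fun r =>
    (AddEquiv.refl _).prodCongr <| (AddEquiv.refl _).prodCongr <|
      ((LinearEquiv.smulOfNeZero ℝ _ m⁻¹ (inv_ne_zero hm)).toAddEquiv).prodCongr <|
        ((LinearEquiv.smulOfNeZero ℝ _ e⁻¹ (inv_ne_zero he)).toAddEquiv).prodCongr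
          ((LinearEquiv.smulOfNeZero ℝ _ (m * lam)⁻¹ (inv_ne_zero hml)).toAddEquiv)
    with hφdef
  have hφ : ∀ (r : ℤ) (y : TTerm p q V W U r),
      φ r y = (y.1, y.2.1, m⁻¹ • y.2.2.1, e⁻¹ • y.2.2.2.1, (m * lam)⁻¹ • y.2.2.2.2) :=
    fun _ _ => rfl
  refine ⟨φ, ?_, fun _ => m⁻¹, fun _ => e⁻¹, (m * lam)⁻¹,
    fun _ => inv_ne_zero hm, fun _ => inv_ne_zero he, inv_ne_zero hml, hφ⟩
  intro r x
  obtain ⟨z1, z2, xv, xw, xu⟩ := x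
  rw [hφ, hφ]
  refine Prod.ext rfl (Prod.ext rfl (Prod.ext ?_ (Prod.ext ?_ ?_)))
  · -- V component
    simp only [dT, AddMonoidHom.prod_apply]
    simp only [dTV, AddMonoidHom.add_apply, AddMonoidHom.coe_comp, Function.comp_apply,
      prV, prZ1, AddMonoidHom.mk'_apply, LinearMap.toAddMonoidHom_coe]
    split_ifs with h
    · simp only [AddMonoidHom.coe_comp, Function.comp_apply, LinearMap.toAddMonoidHom_coe,
        LinearMap.lsmul_apply, map_smul, famCast_smul, smul_add, one_smul]
      rw [smul_smul, inv_mul_cancel₀ hm, one_smul]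
      rfl
    · simp only [AddMonoidHom.zero_apply, add_zero, map_smul, famCast_smul]
  · -- W component
    simp only [dT, AddMonoidHom.prod_apply]
    simp only [dTW, AddMonoidHom.add_apply, AddMonoidHom.coe_comp, Function.comp_apply,
      prW, prZ2, AddMonoidHom.mk'_apply, LinearMap.toAddMonoidHom_coe]
    split_ifs with h
    · simp only [AddMonoidHom.coe_comp, Function.comp_apply, LinearMap.toAddMonoidHom_coe,
        LinearMap.lsmul_apply, map_smul, famCast_smul, smul_add, one_smul]
      rw [smul_smul, inv_mul_cancel₀ he, one_smul]
      rfl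
    · simp only [AddMonoidHom.zero_apply, add_zero, map_smul, famCast_smul]
  · -- U component
    simp only [dT, AddMonoidHom.prod_apply]
    simp only [dTU]
    split_ifs with h
    · simp only [AddMonoidHom.coe_comp, Function.comp_apply, AddMonoidHom.add_apply,
        prV, prW, AddMonoidHom.mk'_apply, LinearMap.toAddMonoidHom_coe,
        famCast_smul, map_smul, LinearMap.smul_apply, LinearMap.neg_apply, one_smul]
      rw [← intoModAt_smul]
      congr 1
      rw [smul_add, smul_smul, smul_smul]
      have h1 : m⁻¹ = (m * lam)⁻¹ * lam := by field_simp
      have h2 : e⁻¹ * -(e * kap / (m * lam)) = (m * lam)⁻¹ * -kap := by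
        field_simp
      rw [h1, h2, smul_smul]
    · simp only [AddMonoidHom.zero_apply, smul_zero]

end
end
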